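/- arXiv:0704.1584 — 6 statements merged into one kernel-verified Lean document; each statement's English description precedes it below -/
import Mathlib

section
/- Let Z be a random vector with values in ℝᵏ and let W be a univariate standard Gaussian random variable independent of Z. Let C ∈ ℝᵏ and τ > 0. Then the function x ↦ P(Z ≤ Cx)·P(|W − x| < τ) + P(Z ≤ CW, |W − x| ≥ τ) is constant on ℝ if and only if C = 0 or P(Z ≤ Cx) = 0 for every x ∈ ℝ. -/
open MeasureTheory ProbabilityTheory Filter Metric Set Topology
open scoped ENNReal NNReal

noncomputable section

namespace PMS

local notation "γ" => gaussianReal 0 1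

lemma gamma_open_pos {U : Set ℝ} (hU : IsOpen U) (hne : U.Nonempty) : 0 < γ U := by
  by_contra h0
  push_neg at h0
  have hz : γ U = 0 := le_antisymm h0 zero_le
  have := gaussianReal_absolutelyContinuous' 0 (v := 1) one_ne_zero hz
  exact hU.measure_ne_zero volume hne this

lemma ball_toReal_pos {τ : ℝ} (hτ : 0 < τ) (x : ℝ) : 0 < (γ (ball x τ)).toReal :=
  ENNReal.toReal_pos (gamma_open_pos isOpen_ball (nonempty_ball.mpr hτ)).ne'
    (measure_ne_top _ _)

lemma integrable_bdd {α : Type*} [MeasurableSpace α] (ν : Measure α) [IsFiniteMeasure ν]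
    {g : α → ℝ} (hg : AEStronglyMeasurable g ν) {M : ℝ} (hM : ∀ t, |g t| ≤ M) :
    Integrable g ν :=
  (integrable_const M).mono' hg (ae_of_all _ (by simpa [Real.norm_eq_abs] using hM))

lemma zero_of_setIntegral {g : ℝ → ℝ} (hg : Continuous g) (hnn : ∀ t, 0 ≤ g t)
    {U : Set ℝ} (hU : IsOpen U) (hi : IntegrableOn g U γ)
    (h : ∫ t in U, g t ∂γ = 0) : ∀ t ∈ U, g t = 0 := by
  intro t₀ ht₀
  by_contra hne
  have hpos : 0 < g t₀ := lt_of_le_of_ne (hnn t₀) (Ne.symm hne)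
  set V := U ∩ g ⁻¹' (Set.Ioi (g t₀ / 2)) with hV
  have hVopen : IsOpen V := hU.inter (isOpen_Ioi.preimage hg)
  have hVne : V.Nonempty := ⟨t₀, ht₀, by simp only [Set.mem_preimage, Set.mem_Ioi]; linarith⟩
  have hVpos : 0 < (γ V).toReal :=
    ENNReal.toReal_pos (gamma_open_pos hVopen hVne).ne' (measure_ne_top _ _)
  have hiV : IntegrableOn g V γ := hi.mono_set Set.inter_subset_left
  have h1 : g t₀ / 2 * (γ V).toReal ≤ ∫ t in V, g t ∂γ := by
    have := setIntegral_mono_on (f := fun _ : ℝ => g t₀ / 2) (g := g)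
      (integrableOn_const (measure_ne_top _ _)) hiV
      hVopen.measurableSet (fun x hx => le_of_lt hx.2)
    simpa [setIntegral_const, mul_comm, measureReal_def] using this
  have h2 : ∫ t in V, g t ∂γ ≤ ∫ t in U, g t ∂γ := by
    apply setIntegral_mono_set hi (ae_of_all _ hnn)
    exact HasSubset.Subset.eventuallyLE Set.inter_subset_left
  nlinarith

lemma const_of_local {τ : ℝ} (hτ : 0 < τ) {f : ℝ → ℝ}
    (h : ∀ x t : ℝ, |x - t| < τ → f x = f t) : ∀ x y : ℝ, f x = f y := by
  have key : ∀ n : ℕ, ∀ x y : ℝ, |y - x| < n * τ → f x = f y := by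
    intro n
    induction n with
    | zero => intro x y h'; norm_num at h'; linarith [abs_nonneg (y - x)]
    | succ n ih =>
      intro x y h'
      rcases Nat.eq_zero_or_pos n with rfl | hn
      · exact h x y (by rw [abs_sub_comm]; simpa using h')
      · set c := x + (y - x) * (n / (n + 1 : ℝ)) with hc
        have hn1 : (0:ℝ) < (n:ℝ) + 1 := by positivity
        have hnpos : (0:ℝ) < (n:ℝ) := by exact_mod_cast hn
        have hd := abs_nonneg (y - x)
        have h'' : |y - x| < ((n:ℝ) + 1) * τ := by push_cast at h'; linarith
        have h₁ : |c - x| < n * τ := by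
          have hcx : c - x = (y - x) * (↑n / (↑n + 1)) := by rw [hc]; ring
          rw [hcx, abs_mul, abs_div, abs_of_nonneg (by positivity : (0:ℝ) ≤ (n:ℝ)),
            abs_of_pos hn1, mul_div_assoc', div_lt_iff₀ hn1]
          nlinarith
        have h₂ : |c - y| < τ := by
          have hcy : c - y = -((y - x) / (↑n + 1)) := by rw [hc]; field_simp; ring
          rw [hcy, abs_neg, abs_div, abs_of_pos hn1, div_lt_iff₀ hn1]
          nlinarith
        exact (ih x c h₁).trans (h c y h₂)
  intro x y
  obtain ⟨n, hnn⟩ := exists_nat_gt (|y - x| / τ)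
  exact key n x y (by rw [div_lt_iff₀ hτ] at hnn; linarith)


lemma gamma_null_of_volume_null {s : Set ℝ} (hs : volume s = 0) : γ s = 0 :=
  gaussianReal_absolutelyContinuous 0 (v := 1) one_ne_zero hs

lemma cont_ball_integral {τ : ℝ} (hτ : 0 < τ) {g : ℝ → ℝ} (hg : Measurable g)
    {M : ℝ} (hM : ∀ t, |g t| ≤ M) :
    Continuous fun x => ∫ t in ball x τ, g t ∂γ := by
  rw [continuous_iff_continuousAt]
  intro x₀
  have hmb : ∀ x : ℝ, MeasurableSet (ball x τ) := fun x => measurableSet_ball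
  have heq : ∀ x : ℝ, ∫ t in ball x τ, g t ∂γ = ∫ t, (ball x τ).indicator g t ∂γ := by
    intro x; rw [integral_indicator (hmb x)]
  simp_rw [ContinuousAt, heq]
  refine tendsto_integral_filter_of_dominated_convergence (fun t => M) ?_ ?_ ?_ ?_
  · exact Eventually.of_forall fun x =>
      (hg.indicator (hmb x)).aestronglyMeasurable
  · refine Eventually.of_forall fun x => Eventually.of_forall fun t => ?_
    by_cases h : t ∈ ball x τ
    · simpa [Set.indicator_of_mem h] using hM t
    · simp only [Set.indicator_of_notMem h, norm_zero]
      exact le_trans (abs_nonneg (g t)) (hM t)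
  · exact integrable_const M
  · have hnull : γ {t : ℝ | dist t x₀ = τ} = 0 := by
      apply gamma_null_of_volume_null
      have : {t : ℝ | dist t x₀ = τ} ⊆ {x₀ - τ, x₀ + τ} := by
        intro t ht
        simp only [mem_setOf_eq, Real.dist_eq] at ht
        rcases abs_eq hτ.le |>.mp ht with h | h
        · exact Or.inr (by simp only [Set.mem_singleton_iff]; linarith)
        · exact Or.inl (by linarith)
      exact measure_mono_null this ((Set.finite_singleton (x₀+τ) |>.insert (x₀-τ)).measure_zero _)
    refine ae_iff.mpr (measure_mono_null ?_ hnull)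
    intro t ht
    simp only [mem_setOf_eq] at ht ⊢
    by_contra hne
    apply ht
    rcases lt_or_gt_of_ne hne with h | h
    · -- dist t x₀ < τ : eventually t ∈ ball x τ
      have : ∀ᶠ x in 𝓝 x₀, t ∈ ball x τ := by
        have : Continuous fun x : ℝ => dist t x := continuous_const.dist continuous_id
        have h2 : ∀ᶠ x in 𝓝 x₀, dist t x < τ := this.continuousAt.eventually_lt continuousAt_const h
        exact h2.mono fun x hx => mem_ball.mpr hx
      have hind : ∀ᶠ x in 𝓝 x₀, (ball x τ).indicator g t = g t :=
        this.mono fun x hx => Set.indicator_of_mem hx g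
      rw [Set.indicator_of_mem (mem_ball.mpr h) g]
      exact Tendsto.congr' (hind.mono fun x hx => hx.symm) tendsto_const_nhds
    · have : ∀ᶠ x in 𝓝 x₀, t ∉ ball x τ := by
        have hc : Continuous fun x : ℝ => dist t x := continuous_const.dist continuous_id
        have h2 : ∀ᶠ x in 𝓝 x₀, τ < dist t x := continuousAt_const.eventually_lt hc.continuousAt h
        exact h2.mono fun x hx => by simp [mem_ball]; linarith
      have hind : ∀ᶠ x in 𝓝 x₀, (ball x τ).indicator g t = 0 :=
        this.mono fun x hx => Set.indicator_of_notMem hx g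
      rw [Set.indicator_of_notMem (by simp [mem_ball]; linarith) g]
      exact Tendsto.congr' (hind.mono fun x hx => hx.symm) tendsto_const_nhds

lemma harmonic_const {τ : ℝ} (hτ : 0 < τ) {f : ℝ → ℝ} (hmeas : Measurable f)
    (h0 : ∀ x, 0 ≤ f x) (h1 : ∀ x, f x ≤ 1)
    (hf : ∀ x, ∫ t in ball x τ, f t ∂γ = f x * (γ (ball x τ)).toReal) :
    ∀ x y : ℝ, f x = f y := by
  set m : ℝ → ℝ := fun x => (γ (ball x τ)).toReal with hm
  have habs : ∀ t, |f t| ≤ 1 := fun t => abs_le.mpr ⟨by linarith [h0 t], h1 t⟩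
  have hmball : ∀ x : ℝ, MeasurableSet (ball x τ) := fun x => measurableSet_ball
  have hione : ∀ x : ℝ, IntegrableOn (fun _ : ℝ => (1:ℝ)) (ball x τ) γ :=
    fun x => integrableOn_const (measure_ne_top _ _)
  have hmeq : ∀ x : ℝ, m x = ∫ t in ball x τ, (1:ℝ) ∂γ := by
    intro x; rw [setIntegral_const]; simp [hm, measureReal_def]
  have mc : Continuous m := by
    have := cont_ball_integral hτ (g := fun _ => (1:ℝ)) measurable_const
      (M := 1) (by norm_num)
    simpa [← hmeq] using this
  have mpos : ∀ x, 0 < m x := fun x => ball_toReal_pos hτ x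
  have mle : ∀ x, m x ≤ 1 := by
    intro x
    have : γ (ball x τ) ≤ 1 := prob_le_one
    simpa [hm] using ENNReal.toReal_le_of_le_ofReal (by norm_num) (by simpa using this)
  set q : ℝ → ℝ := fun x => ∫ t in ball x τ, f t ∂γ with hq
  have qc : Continuous q := cont_ball_integral hτ hmeas (M := 1) habs
  have fc : Continuous f := by
    have : f = fun x => q x / m x := by
      funext x
      rw [hq]; simp only
      rw [hf x]
      field_simp [(mpos x).ne']
      rfl
    rw [this]
    exact qc.div mc (fun x => (mpos x).ne')
  set r : ℝ → ℝ := fun x => ∫ t in ball x τ, (f t)^2 ∂γ with hr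
  have hsqmeas : Measurable fun t => (f t)^2 := hmeas.pow_const 2
  have hsqabs : ∀ t, |(f t)^2| ≤ 1 := by
    intro t
    rw [abs_pow]
    calc |f t|^2 ≤ 1^2 := by nlinarith [abs_nonneg (f t), habs t]
    _ = 1 := one_pow 2
  have rc : Continuous r := cont_ball_integral hτ hsqmeas (M := 1) hsqabs
  have hif : ∀ x : ℝ, IntegrableOn f (ball x τ) γ :=
    fun x => integrable_bdd _ (hmeas.aestronglyMeasurable.restrict) habs
  have hifsq : ∀ x : ℝ, IntegrableOn (fun t => (f t)^2) (ball x τ) γ :=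
    fun x => integrable_bdd _ (hsqmeas.aestronglyMeasurable.restrict) hsqabs
  -- energy identity: for each x, ∫_B (f x - f t)^2 = r x - f x ^ 2 * m x
  have energy : ∀ x : ℝ, ∫ t in ball x τ, (f x - f t)^2 ∂γ = r x - f x ^ 2 * m x := by
    intro x
    have expand : ∀ t : ℝ, (f x - f t)^2 = f x ^ 2 + ((f t)^2 - 2 * f x * f t) := by
      intro t; ring
    have hI1 : IntegrableOn (fun _ : ℝ => f x ^ 2) (ball x τ) γ :=
      integrableOn_const (measure_ne_top _ _)
    have hIm : IntegrableOn (fun t => 2 * f x * f t) (ball x τ) γ := by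
      exact (hif x).const_mul (2 * f x)
    have hI2 : IntegrableOn (fun t => (f t)^2 - 2 * f x * f t) (ball x τ) γ := by
      exact (hifsq x).sub hIm
    rw [show (fun t => (f x - f t)^2) = fun t => f x ^ 2 + ((f t)^2 - 2 * f x * f t) from
      funext expand]
    rw [integral_add hI1 hI2, integral_sub (hifsq x) hIm, integral_const_mul,
      setIntegral_const]
    have hqx : ∫ t in ball x τ, f t ∂γ = f x * m x := hf x
    rw [hqx]
    simp only [smul_eq_mul, hr, hm, measureReal_def]
    ring
  have enonneg : ∀ x : ℝ, 0 ≤ r x - f x ^ 2 * m x := by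
    intro x
    rw [← energy x]
    exact setIntegral_nonneg (hmball x) (fun t _ => sq_nonneg _)
  -- Fubini : ∫ r dγ = ∫ f^2 * m dγ
  have swap : ∫ x, r x ∂γ = ∫ t, (f t)^2 * m t ∂γ := by
    set S : Set (ℝ × ℝ) := {p : ℝ × ℝ | dist p.2 p.1 < τ} with hS
    have hSmeas : MeasurableSet S := by
      have : Continuous fun p : ℝ × ℝ => dist p.2 p.1 :=
        continuous_snd.dist continuous_fst
      exact this.measurable measurableSet_Iio
    set F : ℝ → ℝ → ℝ := fun x t => S.indicator (fun p : ℝ × ℝ => f p.2 ^ 2) (x, t) with hF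
    have hFunc : Function.uncurry F = S.indicator (fun p : ℝ × ℝ => f p.2 ^ 2) := by
      funext p; cases p; rfl
    have hFint : Integrable (Function.uncurry F) (Measure.prod γ γ) := by
      rw [hFunc]
      apply integrable_bdd _ (((hmeas.comp measurable_snd).pow_const 2).indicator
        hSmeas).aestronglyMeasurable
      intro p
      by_cases hp : p ∈ S
      · rw [Set.indicator_of_mem hp]; exact hsqabs _
      · rw [Set.indicator_of_notMem hp]; norm_num
    have hinner : ∀ x : ℝ, ∫ t, F x t ∂γ = r x := by
      intro x
      have : (fun t => F x t) = (ball x τ).indicator (fun t => f t ^ 2) := by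
        funext t
        by_cases ht : t ∈ ball x τ
        · rw [Set.indicator_of_mem ht, hF]
          exact Set.indicator_of_mem (by simpa [hS, mem_ball] using ht) _
        · rw [Set.indicator_of_notMem ht, hF]
          exact Set.indicator_of_notMem (by simpa [hS, mem_ball] using ht) _
      rw [this, integral_indicator (hmball x)]
    have houter : ∀ t : ℝ, ∫ x, F x t ∂γ = f t ^ 2 * m t := by
      intro t
      have hset : {x : ℝ | (x, t) ∈ S} = ball t τ := by
        ext x; simp [hS, mem_ball, dist_comm]
      have : (fun x => F x t) = (ball t τ).indicator (fun _ => f t ^ 2) := by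
        funext x
        by_cases hx : (x, t) ∈ S
        · have hx' : x ∈ ball t τ := by rw [← hset]; exact hx
          rw [Set.indicator_of_mem hx']
          exact Set.indicator_of_mem hx _
        · have hx' : x ∉ ball t τ := by rw [← hset]; exact hx
          rw [Set.indicator_of_notMem hx']
          exact Set.indicator_of_notMem hx _
      rw [this, integral_indicator measurableSet_ball, setIntegral_const]
      simp [hm, mul_comm, measureReal_def]
    calc ∫ x, r x ∂γ = ∫ x, ∫ t, F x t ∂γ ∂γ := by
          congr 1; funext x; rw [hinner x]
    _ = ∫ t, ∫ x, F x t ∂γ ∂γ := integral_integral_swap hFint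
    _ = ∫ t, f t ^ 2 * m t ∂γ := by congr 1; funext t; rw [houter t]
  -- hence ∫ e dγ = 0 where e x = r x - f x^2 * m x
  have hre : Integrable r γ := integrable_bdd _ rc.aestronglyMeasurable
    (M := 1) (fun x => by
      rw [abs_of_nonneg (setIntegral_nonneg (hmball x) (fun t _ => sq_nonneg _))]
      calc r x ≤ ∫ t in ball x τ, (1:ℝ) ∂γ :=
            setIntegral_mono_on (hifsq x) (hione x) (hmball x) (fun t _ => by
              nlinarith [hsqabs t, abs_nonneg ((f t)^2), le_abs_self ((f t)^2)])
      _ = m x := (hmeq x).symm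
      _ ≤ 1 := mle x)
  have hfme : Integrable (fun x => f x ^ 2 * m x) γ := by
    apply integrable_bdd _ ((fc.pow 2).mul mc).aestronglyMeasurable
    intro t
    show |f t ^ 2 * m t| ≤ _
    rw [abs_mul]
    calc |f t ^ 2| * |m t| ≤ 1 * 1 :=
          mul_le_mul (hsqabs t) (by rw [abs_of_pos (mpos t)]; exact mle t)
            (abs_nonneg _) (by norm_num)
    _ = 1 := by norm_num
  have hint0 : ∫ x, (r x - f x ^ 2 * m x) ∂γ = 0 := by
    rw [integral_sub hre hfme, swap, sub_self]
  -- continuous nonneg with zero integral => identically zero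
  have he0 : ∀ x : ℝ, r x - f x ^ 2 * m x = 0 := by
    have hcont : Continuous fun x => r x - f x ^ 2 * m x := rc.sub ((fc.pow 2).mul mc)
    have := zero_of_setIntegral hcont enonneg isOpen_univ
      (by rw [integrableOn_univ]; exact hre.sub hfme)
      (by rw [setIntegral_univ]; exact hint0)
    exact fun x => this x (Set.mem_univ x)
  -- pointwise: f t = f x on ball x τ
  have hloc : ∀ x t : ℝ, |x - t| < τ → f x = f t := by
    intro x t hxt
    have hET : ∫ s in ball x τ, (f x - f s)^2 ∂γ = 0 := by rw [energy x, he0 x]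
    have hcont2 : Continuous fun s => (f x - f s)^2 := (continuous_const.sub fc).pow 2
    have hint2 : IntegrableOn (fun s => (f x - f s)^2) (ball x τ) γ := by
      apply integrable_bdd _ hcont2.aestronglyMeasurable.restrict (M := 4)
      intro s
      rw [abs_of_nonneg (sq_nonneg _)]
      nlinarith [neg_abs_le (f x), le_abs_self (f x), neg_abs_le (f s), le_abs_self (f s),
        habs x, habs s]
    have hz := zero_of_setIntegral hcont2 (fun s => sq_nonneg _) isOpen_ball hint2 hET
    have ht : t ∈ ball x τ := by rw [mem_ball, Real.dist_eq, abs_sub_comm]; exact hxt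
    exact sub_eq_zero.mp (sq_eq_zero_iff.mp (hz t ht))
  exact const_of_local hτ hloc

/-- Lemma A.1: for `Z` an `ℝ^k`-valued random vector, `W` a standard
Gaussian independent of `Z`, `C ∈ ℝ^k` and `τ > 0`, the function
`x ↦ P(Z ≤ Cx) P(|W − x| < τ) + P(Z ≤ CW, |W − x| ≥ τ)` is constant on `ℝ` if and
only if `C = 0` or `P(Z ≤ Cx) = 0` for every `x ∈ ℝ`. -/
theorem constant_iff_degenerate
    {k : ℕ} {Ω : Type*} [MeasurableSpace Ω] (μ : Measure Ω) [IsProbabilityMeasure μ]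
    (Z : Ω → Fin k → ℝ) (W : Ω → ℝ)
    (hZ : Measurable Z) (hW : Measurable W)
    (hWlaw : μ.map W = gaussianReal 0 1)
    (hindep : IndepFun Z W μ)
    (C : Fin k → ℝ) (τ : ℝ) (hτ : 0 < τ) :
    (∀ x y : ℝ,
        (μ { ω | ∀ i, Z ω i ≤ C i * x }).toReal * (μ { ω | |W ω - x| < τ }).toReal +
            (μ { ω | (∀ i, Z ω i ≤ C i * W ω) ∧ τ ≤ |W ω - x| }).toReal =
          (μ { ω | ∀ i, Z ω i ≤ C i * y }).toReal * (μ { ω | |W ω - y| < τ }).toReal +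
            (μ { ω | (∀ i, Z ω i ≤ C i * W ω) ∧ τ ≤ |W ω - y| }).toReal) ↔
      (C = 0 ∨ ∀ x : ℝ, μ { ω | ∀ i, Z ω i ≤ C i * x } = 0) := by
  classical
  have hZprob : IsProbabilityMeasure (μ.map Z) := Measure.isProbabilityMeasure_map hZ.aemeasurable
  set A : ℝ → Set (Fin k → ℝ) := fun w => {z | ∀ i, z i ≤ C i * w} with hA
  have hAmeas : ∀ w, MeasurableSet (A w) := by
    intro w
    have h : A w = ⋂ i, {z : Fin k → ℝ | z i ≤ C i * w} := by
      ext z; simp [hA, Set.mem_iInter]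
    rw [h]
    exact MeasurableSet.iInter fun i =>
      measurableSet_le (measurable_pi_apply i) measurable_const
  set fν : ℝ → ℝ≥0∞ := fun w => (μ.map Z) (A w) with hfν
  have hfνmeas : Measurable fν := by
    have hs : MeasurableSet {p : ℝ × (Fin k → ℝ) | ∀ i, p.2 i ≤ C i * p.1} := by
      have h : {p : ℝ × (Fin k → ℝ) | ∀ i, p.2 i ≤ C i * p.1}
          = ⋂ i, {p : ℝ × (Fin k → ℝ) | p.2 i ≤ C i * p.1} := by
        ext p; simp [Set.mem_iInter]
      rw [h]
      exact MeasurableSet.iInter fun i => measurableSet_le (by fun_prop) (by fun_prop)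
    have h2 := measurable_measure_prodMk_left (ν := μ.map Z) hs
    have heq : fν = fun w => (μ.map Z)
        (Prod.mk w ⁻¹' {p : ℝ × (Fin k → ℝ) | ∀ i, p.2 i ≤ C i * p.1}) := by
      funext w
      rw [hfν]
      congr 1
    rw [heq]; exact h2
  have hfν_le : ∀ w, fν w ≤ 1 := fun w => prob_le_one
  have E1 : ∀ x : ℝ, μ {ω | ∀ i, Z ω i ≤ C i * x} = fν x := by
    intro x
    have hh : fν x = μ (Z ⁻¹' A x) := Measure.map_apply hZ (hAmeas x)
    rw [hh]
    rfl
  have E2 : ∀ x : ℝ, μ {ω | |W ω - x| < τ} = γ (ball x τ) := by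
    intro x
    rw [← hWlaw, Measure.map_apply hW measurableSet_ball]
    congr 1
  have E3 : ∀ B : Set ℝ, MeasurableSet B →
      μ {ω | (∀ i, Z ω i ≤ C i * W ω) ∧ W ω ∈ B} = ∫⁻ w in B, fν w ∂γ := by
    intro B hB
    have hprod := (indepFun_iff_map_prod_eq_prod_map_map hZ.aemeasurable
      hW.aemeasurable).mp hindep
    set T : Set ((Fin k → ℝ) × ℝ) := {p | (∀ i, p.1 i ≤ C i * p.2) ∧ p.2 ∈ B} with hT
    have hT1 : MeasurableSet {p : (Fin k → ℝ) × ℝ | ∀ i, p.1 i ≤ C i * p.2} := by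
      have h : {p : (Fin k → ℝ) × ℝ | ∀ i, p.1 i ≤ C i * p.2}
          = ⋂ i, {p : (Fin k → ℝ) × ℝ | p.1 i ≤ C i * p.2} := by
        ext p; simp [Set.mem_iInter]
      rw [h]
      exact MeasurableSet.iInter fun i => measurableSet_le (by fun_prop) (by fun_prop)
    have hTmeas : MeasurableSet T := by
      have h : T = {p : (Fin k → ℝ) × ℝ | ∀ i, p.1 i ≤ C i * p.2} ∩ (Prod.snd ⁻¹' B) := rfl
      rw [h]
      exact hT1.inter (measurable_snd hB)
    have hev : {ω | (∀ i, Z ω i ≤ C i * W ω) ∧ W ω ∈ B} = (fun ω => (Z ω, W ω)) ⁻¹' T := rfl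
    rw [hev, ← Measure.map_apply (hZ.prodMk hW) hTmeas, hprod, hWlaw,
      Measure.prod_apply_symm hTmeas]
    have hsec : ∀ w : ℝ, (μ.map Z) ((fun z => (z, w)) ⁻¹' T) = B.indicator fν w := by
      intro w
      by_cases hw : w ∈ B
      · rw [Set.indicator_of_mem hw]
        have h : ((fun z : Fin k → ℝ => (z, w)) ⁻¹' T) = A w := by
          ext z; simp [hT, hA, hw]
        rw [h]
      · rw [Set.indicator_of_notMem hw]
        have h : ((fun z : Fin k → ℝ => (z, w)) ⁻¹' T) = ∅ := by
          ext z; simp [hT, hw]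
        rw [h, measure_empty]
    rw [lintegral_congr hsec, lintegral_indicator hB]
  have hb : ∀ s : Set ℝ, ∫⁻ w in s, fν w ∂γ ≤ γ s := by
    intro s
    calc ∫⁻ w in s, fν w ∂γ ≤ ∫⁻ _ in s, 1 ∂γ := lintegral_mono fun w => hfν_le w
    _ = γ s := setLIntegral_one s
  have hfin : ∀ s : Set ℝ, ∫⁻ w in s, fν w ∂γ ≠ ⊤ :=
    fun s => ne_top_of_le_ne_top (measure_ne_top _ _) (hb s)
  constructor
  · -- hard direction
    intro hconst
    by_cases hC0 : C = 0
    · exact Or.inl hC0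
    right
    set f : ℝ → ℝ := fun w => (fν w).toReal with hfdef
    have hfmeas : Measurable f := hfνmeas.ennreal_toReal
    have hf0 : ∀ w, 0 ≤ f w := fun w => ENNReal.toReal_nonneg
    have hf1 : ∀ w, f w ≤ 1 := by
      intro w
      have := ENNReal.toReal_mono (by norm_num) (hfν_le w)
      simpa using this
    set m : ℝ → ℝ := fun u => (γ (ball u τ)).toReal with hmdef
    set Q : ℝ → ℝ := fun u => (∫⁻ w in ball u τ, fν w ∂γ).toReal with hQdef
    have hQle : ∀ u, Q u ≤ m u :=
      fun u => ENNReal.toReal_mono (measure_ne_top _ _) (hb _)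
    have hQ0 : ∀ u, 0 ≤ Q u := fun u => ENNReal.toReal_nonneg
    have hm0 : ∀ u, 0 ≤ m u := fun u => ENNReal.toReal_nonneg
    -- rewrite the second summand
    have hsplit : ∀ u : ℝ, (μ {ω | (∀ i, Z ω i ≤ C i * W ω) ∧ τ ≤ |W ω - u|}).toReal
        = (∫⁻ w, fν w ∂γ).toReal - Q u := by
      intro u
      have h1 : {ω | (∀ i, Z ω i ≤ C i * W ω) ∧ τ ≤ |W ω - u|}
          = {ω | (∀ i, Z ω i ≤ C i * W ω) ∧ W ω ∈ (ball u τ)ᶜ} := by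
        ext ω; simp [mem_ball, Real.dist_eq, not_lt]
      rw [h1, E3 _ measurableSet_ball.compl]
      have hadd := lintegral_add_compl fν (measurableSet_ball (x := u) (ε := τ)) (μ := γ)
      have htot_fin : ∫⁻ w, fν w ∂γ ≠ ⊤ := by
        have := hb Set.univ
        rw [Measure.restrict_univ] at this
        exact ne_top_of_le_ne_top (measure_ne_top _ _) this
      have := congrArg ENNReal.toReal hadd
      rw [ENNReal.toReal_add (hfin _) (hfin _)] at this
      rw [hQdef]
      linarith [this]
    -- derive the mean value property
    have hPhi : ∀ u v : ℝ, f u * m u - Q u = f v * m v - Q v := by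
      intro u v
      have h := hconst u v
      rw [E1 u, E1 v, E2 u, E2 v, hsplit u, hsplit v] at h
      have : f u * m u + ((∫⁻ w, fν w ∂γ).toReal - Q u)
          = f v * m v + ((∫⁻ w, fν w ∂γ).toReal - Q v) := h
      linarith
    -- limit along y = -n
    have hball_tendsto : Tendsto (fun n : ℕ => γ (ball (-(n:ℝ)) τ)) atTop (𝓝 0) := by
      have hsub : ∀ n : ℕ, γ (ball (-(n:ℝ)) τ) ≤ γ (Iic (τ - n)) := by
        intro n
        apply measure_mono
        intro w hw
        rw [mem_ball, Real.dist_eq] at hw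
        rcases abs_lt.mp hw with ⟨h1, h2⟩
        simp only [Set.mem_Iic]
        linarith
      have hIic : Tendsto (fun n : ℕ => γ (Iic (τ - (n:ℝ)))) atTop (𝓝 0) := by
        have hanti : Antitone fun n : ℕ => (Iic (τ - (n:ℝ)) : Set ℝ) := by
          intro a b hab
          apply Iic_subset_Iic.mpr
          have : (a:ℝ) ≤ b := Nat.cast_le.mpr hab
          linarith
        have hempty : (⋂ n : ℕ, (Iic (τ - (n:ℝ)) : Set ℝ)) = ∅ := by
          ext w
          simp only [Set.mem_iInter, Set.mem_Iic, Set.mem_empty_iff_false, iff_false, not_forall,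
            not_le]
          obtain ⟨n, hn⟩ := exists_nat_gt (τ - w)
          exact ⟨n, by linarith⟩
        have := tendsto_measure_iInter_atTop (μ := γ)
          (fun n => measurableSet_Iic.nullMeasurableSet) hanti ⟨0, measure_ne_top _ _⟩
        rw [hempty] at this
        simpa [Function.comp_def] using this
      exact tendsto_of_tendsto_of_tendsto_of_le_of_le tendsto_const_nhds hIic
        (fun n => zero_le) hsub
    have hm_tendsto : Tendsto (fun n : ℕ => m (-(n:ℝ))) atTop (𝓝 0) := by
      have := (ENNReal.tendsto_toReal (a := 0) (by norm_num)).comp hball_tendsto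
      simpa [hmdef, Function.comp_def] using this
    have hMVP : ∀ u : ℝ, ∫ t in ball u τ, f t ∂γ = f u * (γ (ball u τ)).toReal := by
      intro u
      have hzero : f u * m u - Q u = 0 := by
        have habs : ∀ n : ℕ, |f u * m u - Q u| ≤ m (-(n:ℝ)) := by
          intro n
          rw [hPhi u (-(n:ℝ))]
          have h1 : f (-(n:ℝ)) * m (-(n:ℝ)) ≤ m (-(n:ℝ)) := by
            nlinarith [hf0 (-(n:ℝ)), hf1 (-(n:ℝ)), hm0 (-(n:ℝ))]
          have h2 : 0 ≤ f (-(n:ℝ)) * m (-(n:ℝ)) :=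
            mul_nonneg (hf0 _) (hm0 _)
          rw [abs_le]
          constructor <;> [linarith [hQle (-(n:ℝ)), hQ0 (-(n:ℝ))];
            linarith [hQle (-(n:ℝ)), hQ0 (-(n:ℝ))]]
        have habs0 : |f u * m u - Q u| ≤ 0 :=
          ge_of_tendsto hm_tendsto (Eventually.of_forall habs)
        have hnn := abs_nonneg (f u * m u - Q u)
        have := abs_eq_zero.mp (le_antisymm habs0 hnn)
        linarith
      have hint : ∫ t in ball u τ, f t ∂γ = Q u := by
        rw [hQdef, hfdef]
        exact integral_toReal (hfνmeas.aemeasurable.restrict)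
          (ae_of_all _ fun w => lt_of_le_of_lt (hfν_le w) (by norm_num))
      rw [hint]
      show Q u = f u * m u
      linarith [hzero]
    have hcst := harmonic_const hτ hfmeas hf0 hf1 hMVP
    -- now use C ≠ 0
    obtain ⟨i, hCi⟩ : ∃ i, C i ≠ 0 := by
      by_contra hall
      push_neg at hall
      exact hC0 (funext fun i => hall i)
    set B : ℕ → Set Ω := fun n => {ω | Z ω i ≤ -(|C i| * n)} with hB
    have hBmeas : ∀ n, MeasurableSet (B n) :=
      fun n => measurableSet_le ((measurable_pi_apply i).comp hZ) measurable_const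
    have hBanti : Antitone B := by
      intro a b hab ω hω
      simp only [hB, Set.mem_setOf_eq] at *
      have : (a:ℝ) ≤ b := Nat.cast_le.mpr hab
      nlinarith [abs_nonneg (C i), hω]
    have hBempty : (⋂ n, B n) = ∅ := by
      ext ω
      simp only [Set.mem_iInter, hB, Set.mem_setOf_eq, Set.mem_empty_iff_false, iff_false,
        not_forall, not_le]
      have hCpos : 0 < |C i| := abs_pos.mpr hCi
      obtain ⟨n, hn⟩ := exists_nat_gt (-(Z ω i) / |C i|)
      refine ⟨n, ?_⟩
      rw [div_lt_iff₀ hCpos] at hn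
      nlinarith
    have hBtendsto : Tendsto (fun n => μ (B n)) atTop (𝓝 0) := by
      have := tendsto_measure_iInter_atTop (μ := μ)
        (fun n => (hBmeas n).nullMeasurableSet) hBanti ⟨0, measure_ne_top _ _⟩
      rw [hBempty] at this
      simpa [Function.comp_def] using this
    have hBtoReal : Tendsto (fun n => (μ (B n)).toReal) atTop (𝓝 0) := by
      have := (ENNReal.tendsto_toReal (a := 0) (by norm_num)).comp hBtendsto
      simpa [Function.comp_def] using this
    have hfle : ∀ n : ℕ, f 0 ≤ (μ (B n)).toReal := by
      intro n
      set u : ℝ := -(|C i| * n) / C i with hu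
      have hCu : C i * u = -(|C i| * n) := by
        rw [hu]; field_simp
      have hss : {ω | ∀ j, Z ω j ≤ C j * u} ⊆ B n := by
        intro ω hω
        simp only [hB, Set.mem_setOf_eq]
        rw [← hCu]
        exact hω i
      have : f u ≤ (μ (B n)).toReal := by
        rw [hfdef]
        simp only
        rw [← E1 u]
        exact ENNReal.toReal_mono (measure_ne_top _ _) (measure_mono hss)
      rw [hcst 0 u]
      exact this
    have hf00 : f 0 = 0 :=
      le_antisymm (ge_of_tendsto hBtoReal (Eventually.of_forall hfle)) (hf0 0)
    intro x
    have hx0 : f x = 0 := (hcst x 0).trans hf00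
    have : (μ {ω | ∀ i, Z ω i ≤ C i * x}).toReal = 0 := by
      rw [E1 x]; exact hx0
    rcases (ENNReal.toReal_eq_zero_iff _).mp this with h | h
    · exact h
    · exact absurd h (measure_ne_top _ _)
  · -- easy direction
    intro h x y
    rcases h with rfl | h
    · -- C = 0
      simp only [Pi.zero_apply, zero_mul]
      have key : ∀ u : ℝ,
          (μ {ω | ∀ i : Fin k, Z ω i ≤ 0}).toReal * (μ {ω | |W ω - u| < τ}).toReal +
            (μ {ω | (∀ i : Fin k, Z ω i ≤ 0) ∧ τ ≤ |W ω - u|}).toReal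
          = (μ {ω | ∀ i : Fin k, Z ω i ≤ 0}).toReal := by
        intro u
        have hA0 : MeasurableSet {z : Fin k → ℝ | ∀ i, z i ≤ 0} := by
          have h : {z : Fin k → ℝ | ∀ i, z i ≤ 0} = ⋂ i, {z : Fin k → ℝ | z i ≤ 0} := by
            ext z; simp [Set.mem_iInter]
          rw [h]
          exact MeasurableSet.iInter fun i =>
            measurableSet_le (measurable_pi_apply i) measurable_const
        have hBx : MeasurableSet ((ball u τ)ᶜ : Set ℝ) := measurableSet_ball.compl
        have hev : {ω | (∀ i : Fin k, Z ω i ≤ 0) ∧ τ ≤ |W ω - u|}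
            = Z ⁻¹' {z | ∀ i, z i ≤ 0} ∩ W ⁻¹' (ball u τ)ᶜ := by
          ext ω; simp [mem_ball, Real.dist_eq, not_lt]
        have hindep2 := hindep.measure_inter_preimage_eq_mul _ _ hA0 hBx
        have hcompl : μ (W ⁻¹' (ball u τ)ᶜ) = 1 - μ (W ⁻¹' ball u τ) := by
          rw [Set.preimage_compl]
          exact prob_compl_eq_one_sub (hW measurableSet_ball)
        have hWev : {ω | |W ω - u| < τ} = W ⁻¹' ball u τ := by
          ext ω; simp [mem_ball, Real.dist_eq]
        have hZev : {ω | ∀ i : Fin k, Z ω i ≤ 0} = Z ⁻¹' {z | ∀ i, z i ≤ 0} := rfl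
        rw [hev, hindep2, hcompl, hWev, hZev, ENNReal.toReal_mul,
          ENNReal.toReal_sub_of_le prob_le_one (by norm_num)]
        have h1 : (μ (W ⁻¹' ball u τ)).toReal ≤ 1 := by
          have := ENNReal.toReal_mono (a := μ (W ⁻¹' ball u τ)) (by norm_num) prob_le_one
          simpa using this
        simp only [ENNReal.toReal_one]
        ring
      rw [key x, key y]
    · -- all zero
      have hz : ∀ u : ℝ, (μ {ω | ∀ i, Z ω i ≤ C i * u}).toReal = 0 := by
        intro u; rw [h u]; simp
      have htot : μ {ω | ∀ i, Z ω i ≤ C i * W ω} = 0 := by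
        have h3 := E3 Set.univ MeasurableSet.univ
        have h4 : {ω | (∀ i, Z ω i ≤ C i * W ω) ∧ W ω ∈ Set.univ}
            = {ω | ∀ i, Z ω i ≤ C i * W ω} := by ext ω; simp
        rw [h4] at h3
        rw [h3]
        have h5 : ∀ w, fν w = 0 := by
          intro w; rw [← E1 w]; exact h w
        rw [lintegral_congr h5]
        simp
      have hsec : ∀ u : ℝ, μ {ω | (∀ i, Z ω i ≤ C i * W ω) ∧ τ ≤ |W ω - u|} = 0 :=
        fun u => measure_mono_null (fun ω hω => hω.1) htot
      rw [hz x, hz y, hsec x, hsec y]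
      simp

end PMS
end
end

section
/- Let M and N be matrices of dimensions k×p and k×q respectively, such that the concatenated matrix (M:N) has full row rank k (k ≥ 1, p ≥ 1, q ≥ 1). Let t ∈ ℝᵏ, and let V be a random vector in ℝᵖ whose distribution assigns positive mass to every nonempty open subset of ℝᵖ. Define f(x) = P(MV ≤ t + Nx) for x ∈ ℝ^q. If one of the rows of M consists entirely of zeros, then there exist x₀ ∈ ℝ^q, z ∈ ℝ^q, and a constant c > 0 such that f(x₀ + δz) ≥ c and f(x₀ − δz) = 0 for every sufficiently small δ > 0; in particular f is discontinuous at x₀. -/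
open MeasureTheory Matrix Filter Topology

noncomputable section

namespace PMS

/-- Lemma A.2: if `(M:N)` has full row rank `k` and some row of `M`
vanishes, then `f(x) = P(MV ≤ t + Nx)` jumps: there are `x₀`, `z` and `c > 0` with
`f(x₀ + δz) ≥ c` and `f(x₀ − δz) = 0` for all sufficiently small `δ > 0`; in
particular `f` is discontinuous at `x₀`. -/
theorem jump_of_zero_row
    {k p q : ℕ} (hk : 1 ≤ k) (hp : 1 ≤ p) (hq : 1 ≤ q)
    (M : Matrix (Fin k) (Fin p) ℝ) (N : Matrix (Fin k) (Fin q) ℝ)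
    (hrank : (Matrix.fromCols M N).rank = k)
    (t : Fin k → ℝ)
    (μ : Measure (Fin p → ℝ)) [IsProbabilityMeasure μ]
    (hμ : ∀ U : Set (Fin p → ℝ), IsOpen U → U.Nonempty → 0 < μ U)
    (hzero : ∃ i₀ : Fin k, ∀ j : Fin p, M i₀ j = 0) :
    ∃ (x₀ z : Fin q → ℝ) (c : ℝ), 0 < c ∧
      (∃ δ₀ : ℝ, 0 < δ₀ ∧ ∀ δ : ℝ, 0 < δ → δ < δ₀ →
        c ≤ (μ { v | M *ᵥ v ≤ t + N *ᵥ (x₀ + δ • z) }).toReal ∧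
          (μ { v | M *ᵥ v ≤ t + N *ᵥ (x₀ - δ • z) }).toReal = 0) ∧
      ¬ ContinuousAt (fun x : Fin q → ℝ => (μ { v | M *ᵥ v ≤ t + N *ᵥ x }).toReal)
        x₀ := by
  obtain ⟨i₀, hi₀⟩ := hzero
  have hM0 : ∀ v : Fin p → ℝ, (M *ᵥ v) i₀ = 0 := by
    intro v; simp [Matrix.mulVec, dotProduct, hi₀]
  have hsurj : Function.Surjective (Matrix.fromCols M N).mulVecLin := by
    rw [← LinearMap.range_eq_top]
    apply Submodule.eq_top_of_finrank_eq
    rw [Matrix.rank] at hrank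
    rw [hrank, Module.finrank_fin_fun]
  have hNrow : ∃ j, N i₀ j ≠ 0 := by
    by_contra hcon
    push_neg at hcon
    obtain ⟨w, hw⟩ := hsurj (Pi.single i₀ 1)
    have h1 : (Matrix.fromCols M N *ᵥ w) i₀ = 1 := by
      rw [Matrix.mulVecLin_apply] at hw
      rw [hw, Pi.single_eq_same]
    rw [← Sum.elim_comp_inl_inr w, Matrix.fromCols_mulVec_sumElim] at h1
    simp only [Pi.add_apply, hM0] at h1
    have h2 : (N *ᵥ (w ∘ Sum.inr)) i₀ = 0 := by
      simp [Matrix.mulVec, dotProduct, hcon]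
    rw [h2] at h1
    norm_num at h1
  set z : Fin q → ℝ := fun j => N i₀ j with hz
  have hs : 0 < (N *ᵥ z) i₀ := by
    obtain ⟨j₁, hj₁⟩ := hNrow
    have h3 : (N *ᵥ z) i₀ = ∑ j, N i₀ j * N i₀ j := by
      simp [Matrix.mulVec, dotProduct, hz]
    rw [h3]
    apply Finset.sum_pos' (fun j _ => mul_self_nonneg _)
    exact ⟨j₁, Finset.mem_univ _, mul_self_pos.mpr hj₁⟩
  set y : Fin k → ℝ := fun i => if i = i₀ then 0 else 1 with hy
  obtain ⟨w₀, hw₀⟩ := hsurj (y - t)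
  set vb : Fin p → ℝ := w₀ ∘ Sum.inl with hvb
  set x₀ : Fin q → ℝ := w₀ ∘ Sum.inr with hx₀
  have hsum : M *ᵥ vb + N *ᵥ x₀ = y - t := by
    rw [Matrix.mulVecLin_apply] at hw₀
    rw [← hw₀, ← Sum.elim_comp_inl_inr w₀, Matrix.fromCols_mulVec_sumElim]
  have heq : ∀ i, t i + (N *ᵥ x₀) i = y i - (M *ᵥ vb) i := by
    intro i
    have := congrFun hsum i
    simp only [Pi.add_apply, Pi.sub_apply] at this
    linarith
  set U₀ : Set (Fin p → ℝ) :=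
    {v | ∀ i, i ≠ i₀ → (M *ᵥ v) i + (M *ᵥ vb) i < 1/2} with hU₀
  have hMcont : Continuous fun v : Fin p → ℝ => M *ᵥ v := by
    have h4 : (fun v : Fin p → ℝ => M *ᵥ v) = M.mulVecLin := by
      funext v; simp [Matrix.mulVecLin_apply]
    rw [h4]
    exact LinearMap.continuous_of_finiteDimensional _
  have hUopen : IsOpen U₀ := by
    have hrw : U₀ = ⋂ i, {v | i ≠ i₀ → (M *ᵥ v) i + (M *ᵥ vb) i < 1/2} := by
      ext v; simp [hU₀, Set.mem_iInter]
    rw [hrw]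
    apply isOpen_iInter_of_finite
    intro i
    by_cases hii : i = i₀
    · simp [hii]
    · have h5 : {v : Fin p → ℝ | i ≠ i₀ → (M *ᵥ v) i + (M *ᵥ vb) i < 1/2}
          = {v | (M *ᵥ v) i + (M *ᵥ vb) i < 1/2} := by
        ext v; simp [hii]
      rw [h5]
      exact isOpen_lt (((continuous_apply i).comp hMcont).add continuous_const)
        continuous_const
  have hUne : (-vb) ∈ U₀ := by
    intro i _
    simp [Matrix.mulVec_neg]
  set c : ℝ := (μ U₀).toReal with hc
  have hcpos : 0 < c :=
    ENNReal.toReal_pos (hμ U₀ hUopen ⟨-vb, hUne⟩).ne' (measure_ne_top μ U₀)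
  set B : ℝ := 1 + ∑ i, |(N *ᵥ z) i| with hB
  have hBpos : 0 < B := by
    have : (0:ℝ) ≤ ∑ i, |(N *ᵥ z) i| := Finset.sum_nonneg fun i _ => abs_nonneg _
    linarith
  have hBle : ∀ i, |(N *ᵥ z) i| ≤ B := by
    intro i
    have h1 : |(N *ᵥ z) i| ≤ ∑ j, |(N *ᵥ z) j| :=
      Finset.single_le_sum (f := fun j => |(N *ᵥ z) j|)
        (fun j _ => abs_nonneg _) (Finset.mem_univ i)
    linarith
  set δ₀ : ℝ := 1/(2*B) with hδ₀def
  have hδ₀pos : 0 < δ₀ := by positivity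
  have hδprop : ∀ δ : ℝ, 0 < δ → δ < δ₀ →
      c ≤ (μ { v | M *ᵥ v ≤ t + N *ᵥ (x₀ + δ • z) }).toReal ∧
        (μ { v | M *ᵥ v ≤ t + N *ᵥ (x₀ - δ • z) }).toReal = 0 := by
    intro δ hδ hδlt
    have hδB : ∀ i, δ * |(N *ᵥ z) i| < 1/2 := by
      intro i
      have h1 : δ * |(N *ᵥ z) i| ≤ δ * B :=
        mul_le_mul_of_nonneg_left (hBle i) hδ.le
      have h2 : δ * B < δ₀ * B := mul_lt_mul_of_pos_right hδlt hBpos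
      have h3 : δ₀ * B = 1/2 := by rw [hδ₀def]; field_simp
      exact lt_of_le_of_lt h1 (h3 ▸ h2)
    constructor
    · have hsub : U₀ ⊆ {v | M *ᵥ v ≤ t + N *ᵥ (x₀ + δ • z)} := by
        intro v hv i
        have hRHS : (t + N *ᵥ (x₀ + δ • z)) i
            = y i - (M *ᵥ vb) i + δ * (N *ᵥ z) i := by
          rw [Matrix.mulVec_add, Matrix.mulVec_smul]
          simp only [Pi.add_apply, Pi.smul_apply, smul_eq_mul]
          rw [← add_assoc, heq i]
        show (M *ᵥ v) i ≤ (t + N *ᵥ (x₀ + δ • z)) i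
        rw [hRHS]
        by_cases hii : i = i₀
        · subst hii
          have hyi0 : y i = 0 := by simp [hy]
          rw [hM0 v, hM0 vb, hyi0]
          nlinarith [mul_pos hδ hs]
        · have hyi : y i = 1 := by simp [hy, hii]
          have hlt := hv i hii
          have habs : -(1/2) < δ * (N *ᵥ z) i := by
            have h6 := hδB i
            have h4 : |δ * (N *ᵥ z) i| < 1/2 := by
              rw [abs_mul, abs_of_pos hδ]; exact h6
            have h7 := neg_lt_of_abs_lt h4
            linarith
          rw [hyi]
          linarith
      rw [hc]
      exact ENNReal.toReal_le_toReal (measure_ne_top μ _) (measure_ne_top μ _)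
        |>.mpr (measure_mono hsub)
    · have hempty : {v | M *ᵥ v ≤ t + N *ᵥ (x₀ - δ • z)} = ∅ := by
        rw [Set.eq_empty_iff_forall_notMem]
        intro v hv
        have h1 : (M *ᵥ v) i₀ ≤ (t + N *ᵥ (x₀ - δ • z)) i₀ := hv i₀
        have hRHS : (t + N *ᵥ (x₀ - δ • z)) i₀
            = y i₀ - (M *ᵥ vb) i₀ - δ * (N *ᵥ z) i₀ := by
          rw [Matrix.mulVec_sub, Matrix.mulVec_smul]
          simp only [Pi.add_apply, Pi.sub_apply, Pi.smul_apply, smul_eq_mul]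
          have h8 := heq i₀
          linarith
        have hyi0 : y i₀ = 0 := by simp [hy]
        rw [hRHS, hM0 v, hM0 vb, hyi0] at h1
        nlinarith [mul_pos hδ hs]
      rw [hempty]
      simp
  refine ⟨x₀, z, c, hcpos, ⟨δ₀, hδ₀pos, hδprop⟩, ?_⟩
  intro hcont
  set f := fun x : Fin q → ℝ => (μ { v | M *ᵥ v ≤ t + N *ᵥ x }).toReal with hf
  have hpath : ∀ s : ℝ, Tendsto (fun δ : ℝ => x₀ + (s * δ) • z) (𝓝[>] 0) (𝓝 x₀) := by
    intro s
    have hcp : Continuous fun δ : ℝ => x₀ + (s * δ) • z :=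
      continuous_const.add ((continuous_const.mul continuous_id).smul continuous_const)
    have h9 := hcp.tendsto 0
    simp only [mul_zero, zero_smul, add_zero] at h9
    exact h9.mono_left nhdsWithin_le_nhds
  have hIoo : Set.Ioo (0:ℝ) δ₀ ∈ 𝓝[>] (0:ℝ) :=
    Ioo_mem_nhdsGT_of_mem ⟨le_refl 0, hδ₀pos⟩
  have hplus : Tendsto (fun δ : ℝ => f (x₀ + (1 * δ) • z)) (𝓝[>] 0) (𝓝 (f x₀)) :=
    (hcont.tendsto).comp (hpath 1)
  have hge : c ≤ f x₀ := by
    refine ge_of_tendsto hplus ?_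
    filter_upwards [hIoo] with δ hδmem
    simp only [one_mul]
    exact (hδprop δ hδmem.1 hδmem.2).1
  have hminus : Tendsto (fun δ : ℝ => f (x₀ + (-1 * δ) • z)) (𝓝[>] 0) (𝓝 (f x₀)) :=
    (hcont.tendsto).comp (hpath (-1))
  have hzero' : Tendsto (fun δ : ℝ => f (x₀ + (-1 * δ) • z)) (𝓝[>] 0) (𝓝 0) := by
    have hev : (fun δ : ℝ => f (x₀ + (-1 * δ) • z)) =ᶠ[𝓝[>] (0:ℝ)] fun _ => 0 := by
      filter_upwards [hIoo] with δ hδmem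
      have h10 : x₀ + (-1 * δ) • z = x₀ - δ • z := by
        funext j; simp; ring
      rw [h10]
      exact (hδprop δ hδmem.1 hδmem.2).2
    exact Tendsto.congr' hev.symm tendsto_const_nhds
  have hfx0 : f x₀ = 0 := tendsto_nhds_unique hminus hzero'
  rw [hfx0] at hge
  linarith

end PMS
end
end

section
/- Let Z be a random vector with values in ℝᵖ (p ≥ 1) whose distribution is absolutely continuous with respect to Lebesgue measure on ℝᵖ, and let B be a k×p matrix (k ≥ 1). Then the cdf t ↦ P(BZ ≤ t) of BZ is discontinuous at a point t ∈ ℝᵏ if and only if P(BZ ≤ t) > 0 and there exists an index i₀, 1 ≤ i₀ ≤ k, such that the i₀-th row of B is the zero row and the i₀-th coordinate of t is zero. -/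
open MeasureTheory Matrix

noncomputable section

namespace PMS

private noncomputable def rowFunctional {p : ℕ} (v : Fin p → ℝ) : (Fin p → ℝ) →ₗ[ℝ] ℝ :=
  ∑ j, v j • LinearMap.proj j

private lemma rowFunctional_apply {p : ℕ} (v z : Fin p → ℝ) :
    rowFunctional v z = ∑ j, v j * z j := by
  simp [rowFunctional, LinearMap.proj]

private lemma hyperplane_volume_zero {p : ℕ} (v : Fin p → ℝ) (hv : v ≠ 0) (c : ℝ) :
    (volume : Measure (Fin p → ℝ)) {z | ∑ j, v j * z j = c} = 0 := by
  obtain ⟨j₀, hj₀⟩ : ∃ j, v j ≠ 0 := Function.ne_iff.1 hv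
  set f := rowFunctional v
  have hker : LinearMap.ker f ≠ ⊤ := by
    intro h
    have : f (Pi.single j₀ 1) = 0 := by
      rw [← LinearMap.mem_ker, h]; trivial
    rw [rowFunctional_apply] at this
    simp [Pi.single_apply, Finset.sum_ite_eq'] at this
    exact hj₀ this
  set z₀ : Fin p → ℝ := Pi.single j₀ (c / v j₀)
  have hz₀ : f z₀ = c := by
    rw [rowFunctional_apply]
    simp [z₀, Pi.single_apply, Finset.sum_ite_eq', mul_div_cancel₀ _ hj₀]
  have hset : {z : Fin p → ℝ | ∑ j, v j * z j = c}
      = (fun z => z + (-z₀)) ⁻¹' (LinearMap.ker f : Set (Fin p → ℝ)) := by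
    ext z
    simp only [Set.mem_setOf_eq, Set.mem_preimage, SetLike.mem_coe, LinearMap.mem_ker,
      map_add, map_neg, hz₀]
    rw [rowFunctional_apply]
    constructor
    · intro h; rw [h]; ring
    · intro h; linarith
  rw [hset, measure_preimage_add_right]
  exact Measure.addHaar_submodule _ _ hker

/-- Lemma `linsert`: for `Z` an absolutely continuous random vector
in `ℝ^p` and `B` a `k × p` matrix, the cdf of `BZ` is discontinuous at `t` if and only
if `P(BZ ≤ t) > 0` and for some `i₀` the `i₀`-th row of `B` is zero and `t_{i₀} = 0`. -/
theorem cdf_of_linear_image_discontinuous_iff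
    {k p : ℕ} (hk : 1 ≤ k) (hp : 1 ≤ p)
    {Ω : Type*} [MeasurableSpace Ω] (μ : Measure Ω) [IsProbabilityMeasure μ]
    (Z : Ω → Fin p → ℝ) (hZ : Measurable Z)
    (habs : μ.map Z ≪ (volume : Measure (Fin p → ℝ)))
    (B : Matrix (Fin k) (Fin p) ℝ) (t : Fin k → ℝ) :
    ¬ ContinuousAt (fun s : Fin k → ℝ => (μ { ω | B *ᵥ Z ω ≤ s }).toReal) t ↔
      (0 < (μ { ω | B *ᵥ Z ω ≤ t }).toReal ∧
        ∃ i₀ : Fin k, (∀ j : Fin p, B i₀ j = 0) ∧ t i₀ = 0) := by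
  classical
  have hkne : Nonempty (Fin k) := ⟨⟨0, hk⟩⟩
  have hX : Measurable (fun ω => B *ᵥ Z ω : Ω → Fin k → ℝ) := by
    apply measurable_pi_lambda
    intro i
    simp only [Matrix.mulVec, dotProduct]
    exact Finset.measurable_sum _ fun j _ => ((measurable_pi_apply j).comp hZ).const_mul (B i j)
  have hE : ∀ s : Fin k → ℝ, MeasurableSet {ω | B *ᵥ Z ω ≤ s} := fun s =>
    hX measurableSet_Iic
  have hLm : MeasurableSet {ω | ∀ i, (B *ᵥ Z ω) i < t i} := by
    have h1 : {ω | ∀ i, (B *ᵥ Z ω) i < t i}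
        = ⋂ i, (fun ω => (B *ᵥ Z ω) i) ⁻¹' Set.Iio (t i) := by
      ext ω; simp
    rw [h1]
    exact MeasurableSet.iInter fun i => ((measurable_pi_apply i).comp hX) measurableSet_Iio
  set a : ℕ → Fin k → ℝ := fun n i => t i + 1 / (n + 1) with ha
  set b : ℕ → Fin k → ℝ := fun n i => t i - 1 / (n + 1) with hb
  have hposn : ∀ n : ℕ, (0 : ℝ) < 1 / (n + 1) := fun n => by positivity
  have hInter : (⋂ n, {ω | B *ᵥ Z ω ≤ a n}) = {ω | B *ᵥ Z ω ≤ t} := by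
    ext ω
    simp only [Set.mem_iInter, Set.mem_setOf_eq]
    constructor
    · intro h i
      refine le_of_forall_pos_le_add fun ε hε => ?_
      obtain ⟨n, hn⟩ := exists_nat_one_div_lt hε
      exact (h n i).trans (by simp only [ha]; linarith [hn])
    · intro h n i
      exact (h i).trans (by simp only [ha]; linarith [hposn n])
  have hAnti : Antitone fun n => {ω | B *ᵥ Z ω ≤ a n} := by
    intro n m hnm ω hω i
    refine (hω i).trans ?_
    simp only [ha]
    have hc : ((n : ℝ) + 1) ≤ (m : ℝ) + 1 := by exact_mod_cast Nat.succ_le_succ hnm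
    have : (1 : ℝ) / (m + 1) ≤ 1 / (n + 1) := one_div_le_one_div_of_le (by positivity) hc
    linarith
  have hUnion : (⋃ n, {ω | B *ᵥ Z ω ≤ b n}) = {ω | ∀ i, (B *ᵥ Z ω) i < t i} := by
    ext ω
    simp only [Set.mem_iUnion, Set.mem_setOf_eq]
    constructor
    · rintro ⟨n, hn⟩ i
      have := hn i
      simp only [hb] at this
      linarith [hposn n]
    · intro h
      have hδ : 0 < Finset.univ.inf' (Finset.univ_nonempty) (fun i => t i - (B *ᵥ Z ω) i) := by
        rw [Finset.lt_inf'_iff]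
        intro i _
        linarith [h i]
      obtain ⟨n, hn⟩ := exists_nat_one_div_lt hδ
      refine ⟨n, fun i => ?_⟩
      have hle : Finset.univ.inf' (Finset.univ_nonempty) (fun i => t i - (B *ᵥ Z ω) i)
          ≤ t i - (B *ᵥ Z ω) i := Finset.inf'_le _ (Finset.mem_univ i)
      simp only [hb]
      linarith
  have hMono : Monotone fun n => {ω | B *ᵥ Z ω ≤ b n} := by
    intro n m hnm ω hω i
    refine (hω i).trans ?_
    simp only [hb]
    have hc : ((n : ℝ) + 1) ≤ (m : ℝ) + 1 := by exact_mod_cast Nat.succ_le_succ hnm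
    have : (1 : ℝ) / (m + 1) ≤ 1 / (n + 1) := one_div_le_one_div_of_le (by positivity) hc
    linarith
  have hta : Filter.Tendsto (fun n => μ {ω | B *ᵥ Z ω ≤ a n}) Filter.atTop
      (nhds (μ {ω | B *ᵥ Z ω ≤ t})) := by
    rw [← hInter]
    exact tendsto_measure_iInter_atTop (fun n => (hE (a n)).nullMeasurableSet) hAnti
      ⟨0, measure_ne_top μ _⟩
  have htb : Filter.Tendsto (fun n => μ {ω | B *ᵥ Z ω ≤ b n}) Filter.atTop
      (nhds (μ {ω | ∀ i, (B *ᵥ Z ω) i < t i})) := by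
    rw [← hUnion]
    exact tendsto_measure_iUnion_atTop hMono
  have key : ContinuousAt (fun s : Fin k → ℝ => (μ {ω | B *ᵥ Z ω ≤ s}).toReal) t ↔
      μ {ω | ∀ i, (B *ᵥ Z ω) i < t i} = μ {ω | B *ᵥ Z ω ≤ t} := by
    constructor
    · intro hc
      have hbt : Filter.Tendsto b Filter.atTop (nhds t) := by
        rw [tendsto_pi_nhds]
        intro i
        have h0 : Filter.Tendsto (fun n : ℕ => t i - 1 / (n + 1 : ℝ)) Filter.atTop
            (nhds (t i - 0)) :=
          tendsto_const_nhds.sub tendsto_one_div_add_atTop_nhds_zero_nat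
        simpa [hb] using h0
      have h1 : Filter.Tendsto (fun n => (μ {ω | B *ᵥ Z ω ≤ b n}).toReal) Filter.atTop
          (nhds ((μ {ω | B *ᵥ Z ω ≤ t}).toReal)) := hc.tendsto.comp hbt
      have h2 : Filter.Tendsto (fun n => (μ {ω | B *ᵥ Z ω ≤ b n}).toReal) Filter.atTop
          (nhds ((μ {ω | ∀ i, (B *ᵥ Z ω) i < t i}).toReal)) :=
        (ENNReal.tendsto_toReal (measure_ne_top μ _)).comp htb
      exact (ENNReal.toReal_eq_toReal_iff' (measure_ne_top μ _) (measure_ne_top μ _)).1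
        (tendsto_nhds_unique h2 h1)
    · intro heq
      rw [Metric.continuousAt_iff]
      intro ε hε
      have ha' : Filter.Tendsto (fun n => (μ {ω | B *ᵥ Z ω ≤ a n}).toReal) Filter.atTop
          (nhds ((μ {ω | B *ᵥ Z ω ≤ t}).toReal)) :=
        (ENNReal.tendsto_toReal (measure_ne_top μ _)).comp hta
      have hb' : Filter.Tendsto (fun n => (μ {ω | B *ᵥ Z ω ≤ b n}).toReal) Filter.atTop
          (nhds ((μ {ω | B *ᵥ Z ω ≤ t}).toReal)) := by
        have := (ENNReal.tendsto_toReal (measure_ne_top μ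
          (s := {ω | ∀ i, (B *ᵥ Z ω) i < t i}))).comp htb
        rwa [heq] at this
      have e1 := ha'.eventually (Iio_mem_nhds
        (lt_add_of_pos_right ((μ {ω | B *ᵥ Z ω ≤ t}).toReal) hε))
      have e2 := hb'.eventually (Ioi_mem_nhds
        (sub_lt_self ((μ {ω | B *ᵥ Z ω ≤ t}).toReal) hε))
      obtain ⟨n, hn1, hn2⟩ := (e1.and e2).exists
      refine ⟨1 / (n + 1), hposn n, ?_⟩
      intro s hs
      have hbs : b n ≤ s := by
        intro i
        have hd := (dist_le_pi_dist s t i).trans_lt hs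
        rw [Real.dist_eq] at hd
        have := abs_lt.1 hd
        simp only [hb]
        linarith [this.1]
      have hsa : s ≤ a n := by
        intro i
        have hd := (dist_le_pi_dist s t i).trans_lt hs
        rw [Real.dist_eq] at hd
        have := abs_lt.1 hd
        simp only [ha]
        linarith [this.2]
      have m1 : (μ {ω | B *ᵥ Z ω ≤ s}).toReal ≤ (μ {ω | B *ᵥ Z ω ≤ a n}).toReal :=
        ENNReal.toReal_mono (measure_ne_top μ _)
          (measure_mono fun ω hω => le_trans hω hsa)
      have m2 : (μ {ω | B *ᵥ Z ω ≤ b n}).toReal ≤ (μ {ω | B *ᵥ Z ω ≤ s}).toReal :=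
        ENNReal.toReal_mono (measure_ne_top μ _)
          (measure_mono fun ω hω => le_trans hω hbs)
      rw [Real.dist_eq, abs_lt]
      have hn1' : (μ {ω | B *ᵥ Z ω ≤ a n}).toReal < (μ {ω | B *ᵥ Z ω ≤ t}).toReal + ε := hn1
      have hn2' : (μ {ω | B *ᵥ Z ω ≤ t}).toReal - ε < (μ {ω | B *ᵥ Z ω ≤ b n}).toReal := hn2
      constructor <;> linarith
  have hsub : {ω | ∀ i, (B *ᵥ Z ω) i < t i} ⊆ {ω | B *ᵥ Z ω ≤ t} :=
    fun ω h i => (h i).le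
  have hdiff : μ ({ω | B *ᵥ Z ω ≤ t} \ {ω | ∀ i, (B *ᵥ Z ω) i < t i})
      = μ {ω | B *ᵥ Z ω ≤ t} - μ {ω | ∀ i, (B *ᵥ Z ω) i < t i} :=
    measure_diff hsub hLm.nullMeasurableSet (measure_ne_top μ _)
  have hiff0 : (μ {ω | ∀ i, (B *ᵥ Z ω) i < t i} = μ {ω | B *ᵥ Z ω ≤ t}) ↔
      μ ({ω | B *ᵥ Z ω ≤ t} \ {ω | ∀ i, (B *ᵥ Z ω) i < t i}) = 0 := by
    rw [hdiff, tsub_eq_zero_iff_le]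
    exact ⟨fun h => h.ge, fun h => le_antisymm (measure_mono hsub) h⟩
  have key2 : μ ({ω | B *ᵥ Z ω ≤ t} \ {ω | ∀ i, (B *ᵥ Z ω) i < t i}) = 0 ↔
      ¬ (0 < (μ {ω | B *ᵥ Z ω ≤ t}).toReal ∧
        ∃ i₀ : Fin k, (∀ j : Fin p, B i₀ j = 0) ∧ t i₀ = 0) := by
    constructor
    · intro h0
      rintro ⟨hpos, i₀, hrow, hti⟩
      have hXi : ∀ ω, (B *ᵥ Z ω) i₀ = 0 := fun ω => by
        simp [Matrix.mulVec, dotProduct, hrow]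
      have hsub2 : {ω | B *ᵥ Z ω ≤ t} ⊆
          {ω | B *ᵥ Z ω ≤ t} \ {ω | ∀ i, (B *ᵥ Z ω) i < t i} := by
        intro ω hω
        refine ⟨hω, fun hall => ?_⟩
        have := hall i₀
        rw [hXi ω, hti] at this
        exact lt_irrefl 0 this
      have hzero : μ {ω | B *ᵥ Z ω ≤ t} = 0 := measure_mono_null hsub2 h0
      rw [hzero] at hpos
      norm_num at hpos
    · intro hn
      by_cases hG : μ {ω | B *ᵥ Z ω ≤ t} = 0
      · exact measure_mono_null Set.diff_subset hG
      · push_neg at hn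
        have hGpos : 0 < (μ {ω | B *ᵥ Z ω ≤ t}).toReal :=
          ENNReal.toReal_pos hG (measure_ne_top μ _)
        have hrows := hn hGpos
        have hcover : {ω | B *ᵥ Z ω ≤ t} \ {ω | ∀ i, (B *ᵥ Z ω) i < t i}
            ⊆ ⋃ i, {ω | (B *ᵥ Z ω) i = t i} := by
          rintro ω ⟨h1, h2⟩
          simp only [Set.mem_setOf_eq, not_forall, not_lt] at h2
          obtain ⟨i, hi⟩ := h2
          exact Set.mem_iUnion.2 ⟨i, le_antisymm (h1 i) hi⟩
        refine measure_mono_null hcover (measure_iUnion_null fun i => ?_)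
        by_cases hrow : ∀ j, B i j = 0
        · have hti := hrows i hrow
          have hempty : {ω | (B *ᵥ Z ω) i = t i} = ∅ := by
            ext ω
            simp only [Set.mem_setOf_eq, Set.mem_empty_iff_false, iff_false]
            intro h
            apply hti
            rw [← h]
            simp [Matrix.mulVec, dotProduct, hrow]
          rw [hempty]; exact measure_empty
        · push_neg at hrow
          obtain ⟨j, hj⟩ := hrow
          have hHm : MeasurableSet {z : Fin p → ℝ | ∑ j, B i j * z j = t i} := by
            have : {z : Fin p → ℝ | ∑ j, B i j * z j = t i}
                = (fun z : Fin p → ℝ => ∑ j, B i j * z j) ⁻¹' {t i} := by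
              ext z; simp
            rw [this]
            exact (Finset.measurable_sum _ fun j _ =>
              (measurable_pi_apply (X := fun _ : Fin p => ℝ) j).const_mul (B i j)) (measurableSet_singleton (t i))
          have hveq : {ω | (B *ᵥ Z ω) i = t i}
              = Z ⁻¹' {z : Fin p → ℝ | ∑ j, B i j * z j = t i} := by
            ext ω
            simp [Matrix.mulVec, dotProduct]
          rw [hveq, ← Measure.map_apply hZ hHm]
          exact habs (hyperplane_volume_zero (B i) (fun h => hj (congrFun h j)) (t i))
  rw [not_iff_comm, Iff.comm, ← not_iff_not, not_not, key, hiff0, key2]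
  exact not_not
end PMS
end
end

section
/- Let U be a random vector with values in ℝᵏ and let tₙ ∈ ℝᵏ be a sequence converging to t ∈ ℝᵏ. Then every accumulation point of the sequence P(U ≤ tₙ) is of the form P(U_{i₁} ≤ t_{i₁}, …, U_{iₘ} ≤ t_{iₘ}, U_{i_{m+1}} < t_{i_{m+1}}, …, U_{i_k} < t_{i_k}) for some m with 0 ≤ m ≤ k and some permutation (i₁, …, i_k) of (1, …, k). -/
open MeasureTheory Filter

noncomputable section

namespace PMS

lemma exists_perm_aux {k : ℕ} (S : Finset (Fin k)) :
    ∃ e : Equiv.Perm (Fin k), ∀ j : Fin k, e j ∈ S ↔ (j : ℕ) < S.card := by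
  set m := S.card with hmdef
  have hm : m ≤ k := by simpa using S.card_le_univ
  have hk : m + (k - m) = k := Nat.add_sub_cancel' hm
  have hcc : Sᶜ.card = k - m := by simp [Finset.card_compl, hmdef]
  let f1 : Fin m ≃ {x // x ∈ S} := S.equivFin.symm
  let f2 : Fin (k - m) ≃ {x // ¬ x ∈ S} :=
    ((finCongr hcc.symm).trans Sᶜ.equivFin.symm).trans
      (Equiv.subtypeEquivRight (fun x => Finset.mem_compl))
  let d : Fin k ≃ Fin m ⊕ Fin (k - m) := (finCongr hk.symm).trans finSumFinEquiv.symm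
  let e : Equiv.Perm (Fin k) := d.trans ((f1.sumCongr f2).trans (Equiv.sumCompl (· ∈ S)))
  refine ⟨e, fun j => ?_⟩
  rcases hd : d j with a | a
  · have hjv : (j : ℕ) < m := by
      have : j = d.symm (Sum.inl a) := by rw [← hd]; simp
      rw [this]
      simp [d, finSumFinEquiv]
    simp only [e, Equiv.trans_apply, hd, Equiv.sumCongr_apply, Sum.map_inl,
      Equiv.sumCompl_apply_inl]
    exact ⟨fun _ => hjv, fun _ => (f1 a).2⟩
  · have hjv : ¬ (j : ℕ) < m := by
      have : j = d.symm (Sum.inr a) := by rw [← hd]; simp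
      rw [this]
      simp [d, finSumFinEquiv]
    simp only [e, Equiv.trans_apply, hd, Equiv.sumCongr_apply, Sum.map_inr,
      Equiv.sumCompl_apply_inr]
    exact ⟨fun h => absurd h (f2 a).2, fun h => absurd h hjv⟩

/-- every accumulation point of `P(U ≤ tₙ)` for `tₙ → t` is of the
form `P(U_{i₁} ≤ t_{i₁}, …, U_{iₘ} ≤ t_{iₘ}, U_{i_{m+1}} < t_{i_{m+1}}, …, U_{i_k} < t_{i_k})`
for some `m ≤ k` and some permutation `(i₁,…,i_k)` of `(1,…,k)`. -/
theorem accumulation_points_of_cdf_along_sequence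
    {k : ℕ} {Ω : Type*} [MeasurableSpace Ω] (μ : Measure Ω) [IsProbabilityMeasure μ]
    (U : Ω → Fin k → ℝ) (hU : Measurable U)
    (tseq : ℕ → Fin k → ℝ) (t : Fin k → ℝ)
    (htseq : Tendsto tseq atTop (nhds t))
    (α : ℝ)
    (hacc : MapClusterPt α atTop
      (fun n : ℕ => (μ { ω | ∀ i, U ω i ≤ tseq n i }).toReal)) :
    ∃ m : ℕ, m ≤ k ∧ ∃ e : Equiv.Perm (Fin k),
      α = (μ { ω | ∀ j : Fin k,
            (((j : ℕ) < m → U ω (e j) ≤ t (e j)) ∧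
              (m ≤ (j : ℕ) → U ω (e j) < t (e j))) }).toReal := by
  -- extract a subsequence converging to α
  obtain ⟨φ, hφ, hφt⟩ := TopologicalSpace.FirstCountableTopology.tendsto_subseq hacc
  -- stabilize the sign pattern
  set p : ℕ → (Fin k → Bool) := fun n i => decide (t i ≤ tseq (φ n) i) with hp
  have hb : ∃ b : Fin k → Bool, ∃ᶠ n in atTop, p n = b := by
    by_contra h
    push_neg at h
    have h2 : ∀ b : Fin k → Bool, ∀ᶠ n in atTop, p n ≠ b := by
      intro b
      simpa [Filter.not_frequently] using h b
    obtain ⟨n, hn⟩ := (Filter.eventually_all.2 h2).exists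
    exact hn (p n) rfl
  obtain ⟨b, hbfreq⟩ := hb
  obtain ⟨ψ, hψ, hψb⟩ := Filter.extraction_of_frequently_atTop hbfreq
  set σ : ℕ → ℕ := φ ∘ ψ with hσdef
  have hσ : StrictMono σ := hφ.comp hψ
  -- the sign pattern along σ
  have hsign : ∀ n i, if b i then t i ≤ tseq (σ n) i else tseq (σ n) i < t i := by
    intro n i
    have := congrFun (hψb n) i
    simp only [hp] at this
    by_cases hbi : b i = true
    · rw [hbi] at this ⊢
      simpa [hσdef] using of_decide_eq_true this
    · simp only [Bool.not_eq_true] at hbi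
      rw [hbi] at this ⊢
      simpa [hσdef] using of_decide_eq_false this
  -- coordinatewise limits
  have hcoord : ∀ i : Fin k, Tendsto (fun n => tseq (σ n) i) atTop (nhds (t i)) :=
    fun i => ((continuous_apply i).tendsto t).comp (htseq.comp hσ.tendsto_atTop)
  -- the limit set
  set B : Set Ω := {ω | ∀ i, if b i then U ω i ≤ t i else U ω i < t i} with hB
  -- pointwise convergence of indicators
  have hptwise : ∀ ω : Ω, ∀ᶠ n in atTop,
      (ω ∈ {ω | ∀ i, U ω i ≤ tseq (σ n) i} ↔ ω ∈ B) := by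
    intro ω
    have hcoords : ∀ i : Fin k, ∀ᶠ n in atTop,
        (U ω i ≤ tseq (σ n) i ↔ (if b i then U ω i ≤ t i else U ω i < t i)) := by
      intro i
      by_cases hbi : b i = true
      · simp only [hbi, if_true]
        rcases le_or_gt (U ω i) (t i) with hle | hlt
        · filter_upwards with n
          have := hsign n i
          simp only [hbi, if_true] at this
          exact ⟨fun _ => hle, fun _ => hle.trans this⟩
        · filter_upwards [(hcoord i).eventually_lt_const hlt] with n hn
          exact ⟨fun h => absurd (h.trans_lt hn) (lt_irrefl _), fun h => absurd hlt h.not_gt⟩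
      · simp only [Bool.not_eq_true] at hbi
        simp only [hbi, Bool.false_eq_true, if_false]
        rcases lt_or_ge (U ω i) (t i) with hlt | hle
        · filter_upwards [(hcoord i).eventually_const_lt hlt] with n hn
          exact ⟨fun _ => hlt, fun _ => hn.le⟩
        · filter_upwards with n
          have := hsign n i
          simp only [hbi, Bool.false_eq_true, if_false] at this
          exact ⟨fun h => absurd (hle.trans h) this.not_ge,
            fun h => absurd hle h.not_ge⟩
    filter_upwards [Filter.eventually_all.2 hcoords] with n hn
    exact forall_congr' hn
  -- measurability of the sets
  have hA : ∀ s : Fin k → ℝ, MeasurableSet {ω | ∀ i, U ω i ≤ s i} := by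
    intro s
    have : {ω | ∀ i, U ω i ≤ s i} = ⋂ i, {ω | U ω i ≤ s i} := by ext; simp
    rw [this]
    exact MeasurableSet.iInter fun i =>
      measurableSet_le ((measurable_pi_apply i).comp hU) measurable_const
  -- convergence of measures
  have hconv : Tendsto (fun n => μ {ω | ∀ i, U ω i ≤ tseq (σ n) i}) atTop (nhds (μ B)) :=
    MeasureTheory.tendsto_measure_of_tendsto_indicator_of_isFiniteMeasure atTop μ
      (fun n => hA _) hptwise
  have hconvR : Tendsto (fun n => (μ {ω | ∀ i, U ω i ≤ tseq (σ n) i}).toReal) atTop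
      (nhds (μ B).toReal) :=
    (ENNReal.tendsto_toReal (measure_ne_top μ B)).comp hconv
  have hαB : α = (μ B).toReal := by
    have h1 : Tendsto (fun n => (μ {ω | ∀ i, U ω i ≤ tseq (σ n) i}).toReal) atTop (nhds α) :=
      hφt.comp hψ.tendsto_atTop
    exact tendsto_nhds_unique h1 hconvR
  -- build the permutation
  classical
  set S : Finset (Fin k) := Finset.univ.filter (fun i => b i = true) with hS
  obtain ⟨e, he⟩ := exists_perm_aux S
  refine ⟨S.card, by simpa using S.card_le_univ, e, ?_⟩
  have hmemS : ∀ i : Fin k, i ∈ S ↔ b i = true := by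
    intro i; simp [hS]
  have hBeq : {ω | ∀ j : Fin k,
      (((j : ℕ) < S.card → U ω (e j) ≤ t (e j)) ∧
        (S.card ≤ (j : ℕ) → U ω (e j) < t (e j)))} = B := by
    ext ω
    simp only [Set.mem_setOf_eq, hB]
    constructor
    · intro h i
      have hi : e (e.symm i) = i := e.apply_symm_apply i
      by_cases hbi : b i = true
      · have hlt : ((e.symm i : Fin k) : ℕ) < S.card :=
          (he _).1 (by rw [hi]; exact (hmemS i).2 hbi)
        have h2 := (h (e.symm i)).1 hlt
        rw [hi] at h2
        simp [hbi, h2]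
      · have hge : S.card ≤ ((e.symm i : Fin k) : ℕ) := by
          by_contra hc
          exact hbi ((hmemS i).1 (hi ▸ (he _).2 (not_le.1 hc)))
        have h2 := (h (e.symm i)).2 hge
        rw [hi] at h2
        simp only [Bool.not_eq_true] at hbi
        simp [hbi, h2]
    · intro h j
      constructor
      · intro hlt
        have hbj : b (e j) = true := (hmemS _).1 ((he j).2 hlt)
        have := h (e j)
        simpa [hbj] using this
      · intro hge
        have hbj : ¬ b (e j) = true := fun hb =>
          absurd ((he j).1 ((hmemS _).2 hb)) (not_lt.2 hge)
        have := h (e j)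
        simp only [Bool.not_eq_true] at hbj
        simpa [hbj] using this
  rw [hBeq, hαB]

end PMS
end
end

section
/- Let τ > 0 and let Φ and φ denote the cdf and density of the standard normal distribution. Suppose F : ℝ → [0,∞) is continuous, satisfies lim_{x→−∞} F(x) = lim_{x→∞} F(x) = 0, and satisfies the functional equation F(x)·(Φ(x+τ) − Φ(x−τ)) = ∫_{x−τ}^{x+τ} F(z)φ(z) dz for every x ∈ ℝ. Then F is identically zero. -/
open MeasureTheory Real

noncomputable section

namespace PMS

/-- The standard normal density `φ(z) = (2π)^{-1/2} e^{-z²/2}`. -/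
def stdNormPdf (z : ℝ) : ℝ := (Real.sqrt (2 * π))⁻¹ * Real.exp (-z ^ 2 / 2)

/-- The standard normal cdf `Φ(x) = ∫_{-∞}^x φ(z) dz`. -/
def stdNormCdf (x : ℝ) : ℝ := ∫ z in Set.Iic x, stdNormPdf z

lemma stdNormPdf_pos (z : ℝ) : 0 < stdNormPdf z := by
  have h2π : (0:ℝ) < 2 * π := by positivity
  exact mul_pos (inv_pos.mpr (Real.sqrt_pos.mpr h2π)) (Real.exp_pos _)

lemma stdNormPdf_continuous : Continuous stdNormPdf := by
  unfold stdNormPdf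
  fun_prop

lemma stdNormPdf_integrable : Integrable stdNormPdf := by
  have h : Integrable (fun z : ℝ => Real.exp (-(1/2) * z ^ 2)) :=
    integrable_exp_neg_mul_sq (by norm_num)
  have : (fun z : ℝ => Real.exp (-(1/2) * z ^ 2)) = fun z => Real.exp (-z ^ 2 / 2) := by
    funext z; ring_nf
  rw [this] at h
  exact h.const_mul _

lemma cdf_sub (a b : ℝ) :
    stdNormCdf b - stdNormCdf a = ∫ z in a..b, stdNormPdf z := by
  exact intervalIntegral.integral_Iic_sub_Iic (stdNormPdf_integrable.integrableOn)
    (stdNormPdf_integrable.integrableOn)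

/-- **Statement 13** (from the proof of Lemma A.1, via Leeb (2002)): a continuous
nonnegative function `F` vanishing at `±∞` and satisfying
`F(x)(Φ(x+τ) − Φ(x−τ)) = ∫_{x−τ}^{x+τ} F(z) φ(z) dz` for all `x` is identically zero. -/
theorem functional_equation_forces_zero
    (τ : ℝ) (hτ : 0 < τ) (F : ℝ → ℝ)
    (hFcont : Continuous F) (hFnonneg : ∀ x, 0 ≤ F x)
    (hFtop : Filter.Tendsto F Filter.atTop (nhds 0))
    (hFbot : Filter.Tendsto F Filter.atBot (nhds 0))
    (heq : ∀ x : ℝ,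
      F x * (stdNormCdf (x + τ) - stdNormCdf (x - τ)) =
        ∫ z in (x - τ)..(x + τ), F z * stdNormPdf z) :
    ∀ x : ℝ, F x = 0 := by
  by_contra h
  push_neg at h
  obtain ⟨x₀, hx₀⟩ := h
  have hx₀pos : 0 < F x₀ := lt_of_le_of_ne (hFnonneg x₀) (Ne.symm hx₀)
  -- F attains a global maximum
  have hcocompact : Filter.Tendsto F (Filter.cocompact ℝ) (nhds 0) := by
    rw [cocompact_eq_atBot_atTop]
    exact Filter.Tendsto.sup hFbot hFtop
  obtain ⟨z₀, hz₀⟩ : ∃ z₀ : ℝ, ∀ y, F y ≤ F z₀ := by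
    apply hFcont.exists_forall_ge' x₀
    exact hcocompact.eventually_le_const hx₀pos
  set M := F z₀ with hM
  have hMpos : 0 < M := lt_of_lt_of_le hx₀pos (hz₀ x₀)
  -- the set where F = M
  set S : Set ℝ := {x | F x = M} with hS
  have hSclosed : IsClosed S := isClosed_eq hFcont continuous_const
  -- key step: if F x = M then F = M on a τ-neighborhood of x
  have hkey : ∀ x ∈ S, ∀ y ∈ Set.Ioo (x - τ) (x + τ), F y = M := by
    intro x hx y hy
    by_contra hFy
    have hFyM : F y < M := lt_of_le_of_ne (hz₀ y) hFy
    have hab : x - τ < x + τ := by linarith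
    have hlt : (∫ z in (x - τ)..(x + τ), F z * stdNormPdf z) <
        ∫ z in (x - τ)..(x + τ), M * stdNormPdf z := by
      apply intervalIntegral.integral_lt_integral_of_continuousOn_of_le_of_exists_lt hab
      · exact (hFcont.mul stdNormPdf_continuous).continuousOn
      · exact (continuous_const.mul stdNormPdf_continuous).continuousOn
      · intro z _
        exact mul_le_mul_of_nonneg_right (hz₀ z) (stdNormPdf_pos z).le
      · exact ⟨y, Set.Ioo_subset_Icc_self hy,
          mul_lt_mul_of_pos_right hFyM (stdNormPdf_pos y)⟩
    have hMint : (∫ z in (x - τ)..(x + τ), M * stdNormPdf z)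
        = M * (stdNormCdf (x + τ) - stdNormCdf (x - τ)) := by
      rw [intervalIntegral.integral_const_mul, ← cdf_sub]
    rw [hMint, ← hx, heq x] at hlt
    exact lt_irrefl _ hlt
  have hSopen : IsOpen S := by
    rw [isOpen_iff_mem_nhds]
    intro x hx
    have hmem : Set.Ioo (x - τ) (x + τ) ∈ nhds x :=
      Ioo_mem_nhds (by linarith) (by linarith)
    exact Filter.mem_of_superset hmem (fun y hy => hkey x hx y hy)
  have hSuniv : S = Set.univ := by
    rcases isClopen_iff.mp ⟨hSclosed, hSopen⟩ with h | h
    · exact absurd (h ▸ (rfl : F z₀ = M) : z₀ ∈ (∅ : Set ℝ)) (Set.notMem_empty z₀)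
    · exact h
  have hFconst : ∀ x, F x = M := fun x => (hSuniv ▸ Set.mem_univ x : x ∈ S)
  have : Filter.Tendsto F Filter.atTop (nhds M) := by
    have : F = fun _ => M := funext hFconst
    rw [this]; exact tendsto_const_nhds
  have := tendsto_nhds_unique hFtop this
  exact absurd this.symm (ne_of_gt hMpos)

end PMS
end
end

section
/- Let θ ∈ ℝᴾ, γ ∈ ℝᴾ, σ > 0, and set p* = max{p₀(θ), O}. If C_∞^{(p)} = 0 for all p with p* < p ≤ P, then the limit cdf G_{∞,θ,σ,γ} coincides with Φ_{∞,P}, the cdf on ℝᵏ of the Gaussian distribution N(0, σ²AQ⁻¹A′); in particular it does not depend on γ. -/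
open MeasureTheory ProbabilityTheory Matrix Filter Topology Real

noncomputable section

namespace PMS

/-! ### Basic probability constructions -/

/-- Standard Gaussian measure on `ℝ^n`. -/
def stdGaussian (n : ℕ) : Measure (Fin n → ℝ) :=
  Measure.pi fun _ => gaussianReal 0 1

/-- The law `P_{n,θ,σ}` of `Y = Xθ + u`, `u ~ N(0, σ² Iₙ)`. -/
def lawY {n P : ℕ} (X : Matrix (Fin n) (Fin P) ℝ) (θ : Fin P → ℝ) (σ : ℝ) :
    Measure (Fin n → ℝ) :=
  (stdGaussian n).map fun u => X *ᵥ θ + σ • u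

/-- Euclidean norm of a vector in `ℝ^P`. -/
def euclNorm {P : ℕ} (v : Fin P → ℝ) : ℝ := Real.sqrt (∑ i, (v i) ^ 2)

/-- Total variation distance between two (probability) measures:
`sup_E |μ(E) − ν(E)|` over measurable sets `E`. -/
def tvDist {α : Type*} [MeasurableSpace α] (μ ν : Measure α) : ℝ :=
  ⨆ E : { s : Set α // MeasurableSet s }, |(μ E).toReal - (ν E).toReal|

/-! ### Matrix helpers -/

/-- First `p` columns of a matrix with `P` columns (zero columns if `p > P`). -/
def take {m : Type*} {P : ℕ} (X : Matrix m (Fin P) ℝ) (p : ℕ) : Matrix m (Fin p) ℝ :=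
  fun i j => if h : (j : ℕ) < P then X i ⟨j, h⟩ else 0

/-- Upper-left `p × p` block `Q[p:p]` of a `P × P` matrix. -/
def subSq {P : ℕ} (Q : Matrix (Fin P) (Fin P) ℝ) (p : ℕ) : Matrix (Fin p) (Fin p) ℝ :=
  fun i j =>
    if hi : (i : ℕ) < P then if hj : (j : ℕ) < P then Q ⟨i, hi⟩ ⟨j, hj⟩ else 0 else 0

/-- Off-diagonal block `Q[p:¬p]` (rows `1..p`, columns `p+1..P`). -/
def offBlock {P : ℕ} (Q : Matrix (Fin P) (Fin P) ℝ) (p : ℕ) :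
    Matrix (Fin p) (Fin (P - p)) ℝ :=
  fun i j =>
    if hi : (i : ℕ) < P then if hj : p + (j : ℕ) < P then Q ⟨i, hi⟩ ⟨p + j, hj⟩ else 0
    else 0

/-- Last `P − p` components `v[¬p]` of a vector `v ∈ ℝ^P`. -/
def vdrop {P : ℕ} (v : Fin P → ℝ) (p : ℕ) : Fin (P - p) → ℝ :=
  fun j => if h : p + (j : ℕ) < P then v ⟨p + j, h⟩ else 0

/-- Embed a vector of `ℝ^p` into `ℝ^P` by padding with zeros. -/
def padZero {P : ℕ} {p : ℕ} (v : Fin p → ℝ) : Fin P → ℝ :=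
  fun i => if h : (i : ℕ) < p then v ⟨i, h⟩ else 0

/-- `i`-th (0-based) component of a vector, `0` if out of range. -/
def comp {P : ℕ} (v : Fin P → ℝ) (i : ℕ) : ℝ := if h : i < P then v ⟨i, h⟩ else 0

/-- Last component `v_p` (1-based) of `v ∈ ℝ^p`. -/
def lastComp {p : ℕ} (v : Fin p → ℝ) : ℝ :=
  if h : 0 < p then v ⟨p - 1, Nat.sub_lt h one_pos⟩ else 0

/-- Last diagonal entry `M_{p,p}` (1-based) of a `p × p` matrix. -/
def lastEntry {p : ℕ} (M : Matrix (Fin p) (Fin p) ℝ) : ℝ :=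
  if h : 0 < p then M ⟨p - 1, Nat.sub_lt h one_pos⟩ ⟨p - 1, Nat.sub_lt h one_pos⟩ else 0

/-- The `p`-th (i.e. last) standard basis vector of `ℝ^p`. -/
def lastBasis (p : ℕ) : Fin p → ℝ := fun j => if (j : ℕ) = p - 1 then 1 else 0

open scoped Classical in
/-- A generalized inverse: any matrix `N` with `M * N * M = M` (such an `N`
always exists over a field); junk value `0` otherwise. -/
def ginv {k : ℕ} (M : Matrix (Fin k) (Fin k) ℝ) : Matrix (Fin k) (Fin k) ℝ :=
  if h : ∃ N, M * N * M = M then h.choose else 0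

open scoped Classical in
/-- Positive semidefinite square root of a matrix (junk value `0` if the matrix is
not positive semidefinite). -/
def msqrt {k : ℕ} (M : Matrix (Fin k) (Fin k) ℝ) : Matrix (Fin k) (Fin k) ℝ :=
  if h : M.PosSemidef then
    (h.1.eigenvectorUnitary : Matrix (Fin k) (Fin k) ℝ) *
      diagonal (Real.sqrt ∘ h.1.eigenvalues) *
      (star h.1.eigenvectorUnitary : Matrix (Fin k) (Fin k) ℝ)
  else 0

/-! ### Least squares, model selection, and the post-model-selection estimator -/

/-- Restricted least-squares estimator `θ̃(p)` based on the first `p` regressors. -/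
def thetaTilde {n P : ℕ} (X : Matrix (Fin n) (Fin P) ℝ) (p : ℕ) (y : Fin n → ℝ) :
    Fin P → ℝ :=
  padZero (((((take X p)ᵀ * take X p)⁻¹) * (take X p)ᵀ) *ᵥ y)

/-- Error variance estimator `σ̂² = (n−P)⁻¹ ‖Y − X θ̃(P)‖²` from the overall model. -/
def sigmaHatSq {n P : ℕ} (X : Matrix (Fin n) (Fin P) ℝ) (y : Fin n → ℝ) : ℝ :=
  ((n : ℝ) - P)⁻¹ * ∑ i, (y i - (X *ᵥ thetaTilde X P y) i) ^ 2

/-- `ξ_{n,p}`, the square root of the `p`-th diagonal element of `(X[p]'X[p]/n)⁻¹`. -/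
def xiFin {n P : ℕ} (X : Matrix (Fin n) (Fin P) ℝ) (p : ℕ) : ℝ :=
  Real.sqrt (lastEntry (((n : ℝ)⁻¹ • ((take X p)ᵀ * take X p))⁻¹))

/-- The test statistic `T_p = √n θ̃_p(p) / (σ̂ ξ_{n,p})` (with `T_0 = 0`). -/
def Tstat {n P : ℕ} (X : Matrix (Fin n) (Fin P) ℝ) (p : ℕ) (y : Fin n → ℝ) : ℝ :=
  if p = 0 then 0
  else Real.sqrt n * comp (thetaTilde X p y) (p - 1) /
    (Real.sqrt (sigmaHatSq X y) * xiFin X p)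

/-- The `general-to-specific` model selector `p̂ = max{p ≤ P : |T_p| ≥ c_p}`. -/
def phat {n P : ℕ} (X : Matrix (Fin n) (Fin P) ℝ) (c : ℕ → ℝ) (y : Fin n → ℝ) : ℕ :=
  sSup { p | p ≤ P ∧ c p ≤ |Tstat X p y| }

/-- The post-model-selection estimator `θ̃ = θ̃(p̂)`. -/
def pmsEst {n P : ℕ} (X : Matrix (Fin n) (Fin P) ℝ) (c : ℕ → ℝ) (y : Fin n → ℝ) :
    Fin P → ℝ :=
  thetaTilde X (phat X c y) y

/-- The finite-sample cdf `G_{n,θ,σ}(t) = P_{n,θ,σ}(√n A (θ̃ − θ) ≤ t)`. -/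
def Gfin {n P k : ℕ} (X : Matrix (Fin n) (Fin P) ℝ) (A : Matrix (Fin k) (Fin P) ℝ)
    (c : ℕ → ℝ) (θ : Fin P → ℝ) (σ : ℝ) (t : Fin k → ℝ) : ℝ :=
  ((lawY X θ σ) { y | ∀ i, Real.sqrt n * (A *ᵥ (pmsEst X c y - θ)) i ≤ t i }).toReal

/-- The law of `√n A (θ̃ − θ)`, i.e. the distribution whose cdf is `G_{n,θ,σ}`. -/
def GfinMeas {n P k : ℕ} (X : Matrix (Fin n) (Fin P) ℝ) (A : Matrix (Fin k) (Fin P) ℝ)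
    (c : ℕ → ℝ) (θ : Fin P → ℝ) (σ : ℝ) : Measure (Fin k → ℝ) :=
  (lawY X θ σ).map fun y => Real.sqrt n • (A *ᵥ (pmsEst X c y - θ))

/-! ### The nested models `M_p` and related limit quantities -/

/-- `M_p = {θ ∈ ℝ^P : θ_{p+1} = ⋯ = θ_P = 0}`. -/
def Mset (P : ℕ) (p : ℕ) : Set (Fin P → ℝ) := { θ | ∀ i : Fin P, p ≤ (i : ℕ) → θ i = 0 }

/-- The order `p₀(θ) = min{p : θ ∈ M_p}` of a parameter `θ`. -/
def p0 {P : ℕ} (θ : Fin P → ℝ) : ℕ := sInf { p | θ ∈ Mset P p }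

/-- `Δ_s(a,b) = P(|N − a| < b)` for `N ~ N(0, s²)` (for `s = 0`: indicator of `|a| < b`). -/
def Dg (s a b : ℝ) : ℝ := ((gaussianReal 0 ((s ^ 2).toNNReal)) { x | |x - a| < b }).toReal

/-- `C_∞^{(p)} = A[p] Q[p:p]⁻¹ e_p`. -/
def Cinf {P k : ℕ} (Q : Matrix (Fin P) (Fin P) ℝ) (A : Matrix (Fin k) (Fin P) ℝ)
    (p : ℕ) : Fin k → ℝ :=
  take A p *ᵥ ((subSq Q p)⁻¹ *ᵥ lastBasis p)

/-- `A[p] Q[p:p]⁻¹ A[p]'`, the asymptotic covariance matrix (up to `σ²`) of `√n A θ̃(p)`. -/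
def SigInf {P k : ℕ} (Q : Matrix (Fin P) (Fin P) ℝ) (A : Matrix (Fin k) (Fin P) ℝ)
    (p : ℕ) : Matrix (Fin k) (Fin k) ℝ :=
  take A p * (subSq Q p)⁻¹ * (take A p)ᵀ

/-- `ξ_{∞,p}² = (Q[p:p]⁻¹)_{p,p}` (nonnegative square root). -/
def xiInf {P : ℕ} (Q : Matrix (Fin P) (Fin P) ℝ) (p : ℕ) : ℝ :=
  Real.sqrt (lastEntry ((subSq Q p)⁻¹))

/-- `ζ_{∞,p}² = ξ_{∞,p}² − C_∞^{(p)'} (A[p]Q[p:p]⁻¹A[p]')⁻ C_∞^{(p)}`. -/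
def zetaInf {P k : ℕ} (Q : Matrix (Fin P) (Fin P) ℝ) (A : Matrix (Fin k) (Fin P) ℝ)
    (p : ℕ) : ℝ :=
  Real.sqrt (xiInf Q p ^ 2 - Cinf Q A p ⬝ᵥ (ginv (SigInf Q A p) *ᵥ Cinf Q A p))

/-- `b_{∞,p} z = C_∞^{(p)'} (A[p]Q[p:p]⁻¹A[p]')⁻ z`. -/
def bInf {P k : ℕ} (Q : Matrix (Fin P) (Fin P) ℝ) (A : Matrix (Fin k) (Fin P) ℝ)
    (p : ℕ) (z : Fin k → ℝ) : ℝ :=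
  Cinf Q A p ⬝ᵥ (ginv (SigInf Q A p) *ᵥ z)

/-- The measure `Φ_{∞,p}`: Gaussian `N(0, σ² A[p]Q[p:p]⁻¹A[p]')` on `ℝ^k`
(point mass at `0` for `p = 0`). -/
def PhiInfMeas {P k : ℕ} (Q : Matrix (Fin P) (Fin P) ℝ) (A : Matrix (Fin k) (Fin P) ℝ)
    (σ : ℝ) (p : ℕ) : Measure (Fin k → ℝ) :=
  (stdGaussian k).map fun z => σ • (msqrt (SigInf Q A p) *ᵥ z)

/-- The cdf `Φ_{∞,p}(t)`. -/
def PhiInfCdf {P k : ℕ} (Q : Matrix (Fin P) (Fin P) ℝ) (A : Matrix (Fin k) (Fin P) ℝ)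
    (σ : ℝ) (p : ℕ) (t : Fin k → ℝ) : ℝ :=
  (PhiInfMeas Q A σ p { x | x ≤ t }).toReal

/-- The density `φ` of `N(0, M)` on `ℝ^k` (for nonsingular `M`). -/
def gaussPdf {k : ℕ} (M : Matrix (Fin k) (Fin k) ℝ) (x : Fin k → ℝ) : ℝ :=
  (Real.sqrt ((2 * π) ^ k * M.det))⁻¹ * Real.exp (-(x ⬝ᵥ (M⁻¹ *ᵥ x)) / 2)

/-- The bias vector `β^{(p)} = A (Q[p:p]⁻¹ Q[p:¬p] γ[¬p] ; −γ[¬p])`. -/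
def betaLim {P k : ℕ} (Q : Matrix (Fin P) (Fin P) ℝ) (A : Matrix (Fin k) (Fin P) ℝ)
    (γ : Fin P → ℝ) (p : ℕ) : Fin k → ℝ :=
  A *ᵥ fun i =>
    if h : (i : ℕ) < p then ((subSq Q p)⁻¹ *ᵥ (offBlock Q p *ᵥ vdrop γ p)) ⟨i, h⟩
    else -γ i

/-- `ν_p = γ_p + (Q[p:p]⁻¹ Q[p:¬p] γ[¬p])_p`. -/
def nuLim {P : ℕ} (Q : Matrix (Fin P) (Fin P) ℝ) (γ : Fin P → ℝ) (p : ℕ) : ℝ :=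
  comp γ (p - 1) + lastComp ((subSq Q p)⁻¹ *ᵥ (offBlock Q p *ᵥ vdrop γ p))

/-- The large-sample limit cdf `G_{∞,θ,σ,γ}(t)` of `G_{n,θ+γ/√n,σ}(t)`. -/
def Ginf {P k : ℕ} (Q : Matrix (Fin P) (Fin P) ℝ) (A : Matrix (Fin k) (Fin P) ℝ)
    (c : ℕ → ℝ) (O : ℕ) (θ : Fin P → ℝ) (σ : ℝ) (γ : Fin P → ℝ) (t : Fin k → ℝ) : ℝ :=
  let ps := max (p0 θ) O
  PhiInfCdf Q A σ ps (t - betaLim Q A γ ps) *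
      ∏ q ∈ Finset.Ioc ps P, Dg (σ * xiInf Q q) (nuLim Q γ q) (c q * σ * xiInf Q q) +
    ∑ p ∈ Finset.Ioc ps P,
      (∫ z in { x : Fin k → ℝ | x ≤ t - betaLim Q A γ p },
          (1 - Dg (σ * zetaInf Q A p) (nuLim Q γ p + bInf Q A p z)
              (c p * σ * xiInf Q p)) ∂(PhiInfMeas Q A σ p)) *
        ∏ q ∈ Finset.Ioc p P, Dg (σ * xiInf Q q) (nuLim Q γ q) (c q * σ * xiInf Q q)

/-- The large-sample limit distribution `G_{∞,θ,σ,γ}` as a measure on `ℝ^k`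
(its cdf is `Ginf`). -/
def GinfMeas {P k : ℕ} (Q : Matrix (Fin P) (Fin P) ℝ) (A : Matrix (Fin k) (Fin P) ℝ)
    (c : ℕ → ℝ) (O : ℕ) (θ : Fin P → ℝ) (σ : ℝ) (γ : Fin P → ℝ) :
    Measure (Fin k → ℝ) :=
  let ps := max (p0 θ) O
  (ENNReal.ofReal
        (∏ q ∈ Finset.Ioc ps P, Dg (σ * xiInf Q q) (nuLim Q γ q) (c q * σ * xiInf Q q))) •
      ((PhiInfMeas Q A σ ps).map fun z => z + betaLim Q A γ ps) +
    ∑ p ∈ Finset.Ioc ps P,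
      (ENNReal.ofReal
          (∏ q ∈ Finset.Ioc p P, Dg (σ * xiInf Q q) (nuLim Q γ q) (c q * σ * xiInf Q q))) •
        (((PhiInfMeas Q A σ p).withDensity fun z =>
              ENNReal.ofReal
                (1 - Dg (σ * zetaInf Q A p) (nuLim Q γ p + bInf Q A p z)
                    (c p * σ * xiInf Q p))).map
          fun z => z + betaLim Q A γ p)

/-! ### Auxiliary lemmas for Statement 19 -/

private lemma telescope (d : ℕ → ℝ) (a : ℕ) : ∀ b : ℕ,
    ∑ p ∈ Finset.Ioc a b, (1 - d p) * ∏ q ∈ Finset.Ioc p b, d q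
      = 1 - ∏ q ∈ Finset.Ioc a b, d q := by
  intro b
  induction b with
  | zero =>
    rw [Finset.Ioc_eq_empty (by omega)]
    simp
  | succ b ih =>
    by_cases hab : a ≤ b
    · rw [Finset.sum_Ioc_succ_top (by omega), Finset.prod_Ioc_succ_top hab,
        Finset.sum_congr rfl (fun p hp => by
          rw [Finset.prod_Ioc_succ_top (Finset.mem_Ioc.1 hp).2, ← mul_assoc]),
        ← Finset.sum_mul, ih, Finset.Ioc_eq_empty (by omega : ¬ b + 1 < b + 1)]
      simp only [Finset.prod_empty, mul_one]
      ring
    · rw [Finset.Ioc_eq_empty (by omega)]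
      simp [Finset.Ioc_eq_empty (show ¬ a < b + 1 by omega)]

private lemma sum_fin_le {P p : ℕ} (h : p ≤ P) (g : Fin P → ℝ)
    (hg : ∀ a : Fin P, p ≤ (a : ℕ) → g a = 0) :
    ∑ a : Fin P, g a = ∑ i : Fin p, g (Fin.castLE h i) := by
  set G : ℕ → ℝ := fun a => if ha : a < P then g ⟨a, ha⟩ else 0 with hG
  have h1 : ∑ a : Fin P, g a = ∑ a ∈ Finset.range P, G a := by
    rw [← Fin.sum_univ_eq_sum_range]
    exact Finset.sum_congr rfl fun a _ => by simp [hG, a.2]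
  have h2 : ∑ i : Fin p, g (Fin.castLE h i) = ∑ a ∈ Finset.range p, G a := by
    rw [← Fin.sum_univ_eq_sum_range]
    refine Finset.sum_congr rfl fun a _ => by simp [hG, a.2.trans_le h]; rfl
  rw [h1, h2]
  exact (Finset.sum_subset (Finset.range_subset_range.2 h) (fun x hx hx2 => by
    simp only [Finset.mem_range] at hx hx2
    simp only [hG, dif_pos hx]
    exact hg ⟨x, hx⟩ (Nat.le_of_not_lt hx2))).symm

private lemma sum_fin_ge {P q : ℕ} (h : q ≤ P) (g : Fin P → ℝ)
    (hg : ∀ a : Fin P, (a : ℕ) < q → g a = 0) :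
    ∑ a : Fin P, g a = ∑ j : Fin (P - q), g ⟨q + j, by omega⟩ := by
  set G : ℕ → ℝ := fun a => if ha : a < P then g ⟨a, ha⟩ else 0 with hG
  have h1 : ∑ a : Fin P, g a = ∑ a ∈ Finset.range P, G a := by
    rw [← Fin.sum_univ_eq_sum_range]
    exact Finset.sum_congr rfl fun a _ => by simp [hG, a.2]
  have h2 : ∑ j : Fin (P - q), g ⟨q + j, by omega⟩ = ∑ a ∈ Finset.range (P - q), G (q + a) := by
    rw [← Fin.sum_univ_eq_sum_range (fun a => G (q + a))]
    refine Finset.sum_congr rfl fun a _ => ?_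
    have ha : q + (a : ℕ) < P := by omega
    simp [hG, ha]
  have h0 : ∑ a ∈ Finset.Ico 0 q, G a = 0 := by
    refine Finset.sum_eq_zero fun x hx => ?_
    simp only [Finset.mem_Ico] at hx
    have hxP : x < P := by omega
    simp only [hG, dif_pos hxP]
    exact hg ⟨x, hxP⟩ hx.2
  rw [h1, h2, Finset.range_eq_Ico, ← Finset.sum_Ico_consecutive G (Nat.zero_le q) h, h0, zero_add,
    Finset.sum_Ico_eq_sum_range, Finset.range_eq_Ico]

private lemma subSq_apply {P : ℕ} (Q : Matrix (Fin P) (Fin P) ℝ) {p : ℕ} (h : p ≤ P)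
    (i j : Fin p) : subSq Q p i j = Q ⟨i, i.2.trans_le h⟩ ⟨j, j.2.trans_le h⟩ := by
  simp [subSq, i.2.trans_le h, j.2.trans_le h]

private lemma take_apply {m : Type*} {P : ℕ} (X : Matrix m (Fin P) ℝ) {p : ℕ} (h : p ≤ P)
    (i : m) (j : Fin p) : take X p i j = X i ⟨j, j.2.trans_le h⟩ := by
  simp [take, j.2.trans_le h]

private lemma subSq_posDef {P : ℕ} {Q : Matrix (Fin P) (Fin P) ℝ} (hQ : Q.PosDef)
    {p : ℕ} (h : p ≤ P) : (subSq Q p).PosDef := by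
  have hsym : ∀ a b : Fin P, Q a b = Q b a := fun a b => by
    have := congrFun (congrFun hQ.1 b) a
    simpa using this
  rw [posDef_iff_dotProduct_mulVec]
  constructor
  · ext i j
    rw [conjTranspose_apply, subSq_apply Q h, subSq_apply Q h, star_trivial]
    exact hsym _ _
  · intro x hx
    set y : Fin P → ℝ := padZero x with hy
    have hy0 : ∀ a : Fin P, p ≤ (a : ℕ) → y a = 0 := fun a ha => by
      simp [hy, padZero, Nat.not_lt.2 ha]
    have hyc : ∀ i : Fin p, y (Fin.castLE h i) = x i := fun i => by
      simp [hy, padZero, i.2]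
    have hQy : ∀ i : Fin p, (Q *ᵥ y) (Fin.castLE h i) = (subSq Q p *ᵥ x) i := by
      intro i
      show ∑ b : Fin P, Q (Fin.castLE h i) b * y b = ∑ j : Fin p, subSq Q p i j * x j
      rw [sum_fin_le h _ (fun a ha => by rw [hy0 a ha, mul_zero])]
      refine Finset.sum_congr rfl fun j _ => ?_
      rw [hyc j, subSq_apply Q h]
      rfl
    have hkey : dotProduct (star x) (subSq Q p *ᵥ x) = dotProduct (star y) (Q *ᵥ y) := by
      show ∑ i : Fin p, star (x i) * (subSq Q p *ᵥ x) i = ∑ a : Fin P, star (y a) * (Q *ᵥ y) a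
      rw [sum_fin_le h _ (fun a ha => by rw [hy0 a ha, star_zero, zero_mul])]
      exact (Finset.sum_congr rfl fun i _ => by rw [hyc i, hQy i]).symm
    rw [hkey]
    refine hQ.dotProduct_mulVec_pos (x := y) ?_
    intro hy0'
    apply hx
    funext i
    have := congrFun hy0' (Fin.castLE h i)
    rwa [hyc i] at this

private lemma subSq_det_isUnit {P : ℕ} {Q : Matrix (Fin P) (Fin P) ℝ} (hQ : Q.PosDef)
    {p : ℕ} (h : p ≤ P) : IsUnit (subSq Q p).det :=
  (subSq_posDef hQ h).det_pos.ne'.isUnit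

private lemma subSq_castSucc {P : ℕ} (Q : Matrix (Fin P) (Fin P) ℝ) {p : ℕ}
    (h : p + 1 ≤ P) (i j : Fin p) :
    subSq Q (p+1) i.castSucc j.castSucc = subSq Q p i j := by
  rw [subSq_apply Q h, subSq_apply Q (by omega : p ≤ P)]
  rfl

private lemma key {P : ℕ} {Q : Matrix (Fin P) (Fin P) ℝ} (hQ : Q.PosDef) {p : ℕ}
    (h : p + 1 ≤ P) (u : Fin (p + 1) → ℝ) :
    (subSq Q (p+1))⁻¹ *ᵥ u
      = Fin.snoc ((subSq Q p)⁻¹ *ᵥ fun i => u i.castSucc) 0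
        + (u (Fin.last p)
            - (subSq Q (p+1) *ᵥ Fin.snoc ((subSq Q p)⁻¹ *ᵥ fun i => u i.castSucc) 0)
                (Fin.last p))
          • ((subSq Q (p+1))⁻¹ *ᵥ lastBasis (p+1)) := by
  have hM : IsUnit (subSq Q (p+1)).det := subSq_det_isUnit hQ h
  have hN : IsUnit (subSq Q p).det := subSq_det_isUnit hQ (by omega)
  set x : Fin p → ℝ := (subSq Q p)⁻¹ *ᵥ fun i => u i.castSucc with hxdef
  set cns : ℝ := u (Fin.last p) - (subSq Q (p+1) *ᵥ Fin.snoc x 0) (Fin.last p) with hcns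
  have hMx : subSq Q (p+1) *ᵥ (Fin.snoc x 0 + cns • ((subSq Q (p+1))⁻¹ *ᵥ lastBasis (p+1)))
      = u := by
    rw [mulVec_add, mulVec_smul, mulVec_mulVec, Matrix.mul_nonsing_inv _ hM, one_mulVec]
    funext i
    refine Fin.lastCases ?_ ?_ i
    · have hlb : lastBasis (p+1) (Fin.last p) = 1 := by
        simp [lastBasis]
      simp only [Pi.add_apply, Pi.smul_apply, hlb, smul_eq_mul, mul_one, hcns]
      ring
    · intro i
      have hlb : lastBasis (p+1) i.castSucc = 0 := by
        have hi := i.2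
        simp only [lastBasis, Fin.coe_castSucc]
        rw [if_neg (by omega)]
      simp only [Pi.add_apply, Pi.smul_apply, hlb, smul_eq_mul, mul_zero, add_zero]
      have hrow : (subSq Q (p+1) *ᵥ Fin.snoc x 0) i.castSucc = (subSq Q p *ᵥ x) i := by
        simp only [Matrix.mulVec, dotProduct]
        rw [Fin.sum_univ_castSucc]
        simp only [Fin.snoc_castSucc, Fin.snoc_last, mul_zero, add_zero]
        exact Finset.sum_congr rfl fun j _ => by rw [subSq_castSucc Q h]
      rw [hrow, hxdef, mulVec_mulVec, Matrix.mul_nonsing_inv _ hN, one_mulVec]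
  conv_lhs => rw [← hMx]
  rw [mulVec_mulVec, Matrix.nonsing_inv_mul _ hM, one_mulVec]

private lemma take_mulVec_snoc {P k : ℕ} (A : Matrix (Fin k) (Fin P) ℝ) {p : ℕ}
    (h : p + 1 ≤ P) (x : Fin p → ℝ) :
    take A (p+1) *ᵥ Fin.snoc x 0 = take A p *ᵥ x := by
  funext i
  simp only [Matrix.mulVec, dotProduct]
  rw [Fin.sum_univ_castSucc]
  simp only [Fin.snoc_castSucc, Fin.snoc_last, mul_zero, add_zero]
  refine Finset.sum_congr rfl fun j _ => ?_
  rw [take_apply A h, take_apply A (by omega : p ≤ P)]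
  rfl

private lemma reduce {P k : ℕ} {Q : Matrix (Fin P) (Fin P) ℝ} {A : Matrix (Fin k) (Fin P) ℝ}
    (hQ : Q.PosDef) {p : ℕ} (h : p + 1 ≤ P) (hC : Cinf Q A (p+1) = 0) (u : Fin (p+1) → ℝ) :
    take A (p+1) *ᵥ ((subSq Q (p+1))⁻¹ *ᵥ u)
      = take A p *ᵥ ((subSq Q p)⁻¹ *ᵥ fun i => u i.castSucc) := by
  rw [key hQ h u, mulVec_add, mulVec_smul, take_mulVec_snoc A h]
  have hCeq : take A (p+1) *ᵥ ((subSq Q (p+1))⁻¹ *ᵥ lastBasis (p+1)) = 0 := hC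
  rw [hCeq, smul_zero, add_zero]

private lemma sig_step {P k : ℕ} {Q : Matrix (Fin P) (Fin P) ℝ} {A : Matrix (Fin k) (Fin P) ℝ}
    (hQ : Q.PosDef) {p : ℕ} (h : p + 1 ≤ P) (hC : Cinf Q A (p+1) = 0) :
    SigInf Q A (p+1) = SigInf Q A p := by
  ext i j
  have e1 : ∀ (q : ℕ) (B : Matrix (Fin k) (Fin q) ℝ) (S : Matrix (Fin q) (Fin q) ℝ),
      (B * S * Bᵀ) i j = (B *ᵥ (S *ᵥ fun l => B j l)) i := by
    intro q B S
    rw [mulVec_mulVec]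
    simp only [Matrix.mul_apply, Matrix.mulVec, dotProduct, Matrix.transpose_apply]
  have harg : (fun l : Fin p => take A (p+1) j l.castSucc) = (fun l => take A p j l) := by
    funext l
    rw [take_apply A h, take_apply A (by omega : p ≤ P)]
    rfl
  show (take A (p+1) * (subSq Q (p+1))⁻¹ * (take A (p+1))ᵀ) i j
      = (take A p * (subSq Q p)⁻¹ * (take A p)ᵀ) i j
  rw [e1, e1, reduce hQ h hC, harg]

private lemma offw {P : ℕ} (Q : Matrix (Fin P) (Fin P) ℝ) (γ : Fin P → ℝ) {q : ℕ}
    (h : q ≤ P) (i : Fin q) :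
    (offBlock Q q *ᵥ vdrop γ q) i
      = ∑ j : Fin P, if q ≤ (j : ℕ) then Q ⟨i, i.2.trans_le h⟩ j * γ j else 0 := by
  rw [sum_fin_ge h _ (fun a ha => if_neg (by omega))]
  simp only [Matrix.mulVec, dotProduct]
  refine Finset.sum_congr rfl fun j _ => ?_
  have hj : q + (j : ℕ) < P := by omega
  simp only [offBlock, vdrop, dif_pos hj, dif_pos (i.2.trans_le h)]
  rw [if_pos (by simp : q ≤ ((⟨q + (j:ℕ), hj⟩ : Fin P) : ℕ))]

private lemma mulVec_padZero {P k q : ℕ} (A : Matrix (Fin k) (Fin P) ℝ) (h : q ≤ P)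
    (v : Fin q → ℝ) : A *ᵥ (padZero v : Fin P → ℝ) = take A q *ᵥ v := by
  funext i
  simp only [Matrix.mulVec, dotProduct]
  rw [sum_fin_le h (fun j => A i j * padZero v j)
    (fun a ha => by simp [padZero, Nat.not_lt.2 ha])]
  refine Finset.sum_congr rfl fun j _ => ?_
  rw [take_apply A h]
  have : (padZero v : Fin P → ℝ) (Fin.castLE h j) = v j := by
    simp [padZero, j.2]
  rw [this]
  rfl

private lemma snoc_lin {p : ℕ} (a b : Fin p → ℝ) (c : ℝ) :
    (Fin.snoc (a - c • b) 0 : Fin (p+1) → ℝ)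
      = (Fin.snoc a 0 : Fin (p+1) → ℝ) - c • (Fin.snoc b 0 : Fin (p+1) → ℝ) := by
  funext i
  refine Fin.lastCases ?_ ?_ i
  · simp
  · intro i
    simp

private lemma snoc_at_lt {p : ℕ} (x : Fin p → ℝ) (i : Fin (p+1)) (hi : (i : ℕ) < p) :
    (Fin.snoc x 0 : Fin (p+1) → ℝ) i = x ⟨i, hi⟩ := by
  obtain ⟨iv, hiv⟩ := i
  show (Fin.snoc x 0 : Fin (p+1) → ℝ) ((⟨iv, hi⟩ : Fin p).castSucc) = x ⟨iv, hi⟩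
  rw [Fin.snoc_castSucc]

private lemma snoc_at_last {p : ℕ} (x : Fin p → ℝ) (i : Fin (p+1)) (hi : (i : ℕ) = p) :
    (Fin.snoc x 0 : Fin (p+1) → ℝ) i = 0 := by
  have h : i = Fin.last p := Fin.ext (by simpa using hi)
  rw [h]
  rw [Fin.snoc_last]

private lemma single_at_eq {p : ℕ} (i : Fin (p+1)) (hi : (i : ℕ) = p) :
    (Pi.single (Fin.last p) 1 : Fin (p+1) → ℝ) i = 1 := by
  rw [show i = Fin.last p from Fin.ext (by simpa using hi)]
  exact Pi.single_eq_same _ _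

private lemma single_at_ne {p : ℕ} (i : Fin (p+1)) (hi : ¬ (i : ℕ) = p) :
    (Pi.single (Fin.last p) 1 : Fin (p+1) → ℝ) i = 0 := by
  have hne : i ≠ Fin.last p := fun hc => hi (by rw [hc]; rfl)
  exact Pi.single_eq_of_ne hne _

private lemma beta_step {P k : ℕ} {Q : Matrix (Fin P) (Fin P) ℝ} {A : Matrix (Fin k) (Fin P) ℝ}
    (hQ : Q.PosDef) {p : ℕ} (h : p + 1 ≤ P) (hC : Cinf Q A (p+1) = 0) (γ : Fin P → ℝ) :
    betaLim Q A γ (p+1) = betaLim Q A γ p := by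
  have hM : IsUnit (subSq Q (p+1)).det := subSq_det_isUnit hQ h
  have hpP : p < P := h
  set wq : Fin (p+1) → ℝ := offBlock Q (p+1) *ᵥ vdrop γ (p+1) with hwq
  set w0 : Fin p → ℝ := offBlock Q p *ᵥ vdrop γ p with hw0
  set m : Fin p → ℝ := fun i => Q ⟨i, by omega⟩ ⟨p, hpP⟩ with hm
  set gp : ℝ := γ ⟨p, hpP⟩ with hgp
  set g : Fin (p+1) → ℝ := (subSq Q (p+1))⁻¹ *ᵥ lastBasis (p+1) with hg
  -- step 1 : restriction of wq
  have hu1 : (fun i : Fin p => wq i.castSucc) = w0 - gp • m := by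
    funext i
    have e1 := offw Q γ h i.castSucc
    have e0 := offw Q γ (by omega : p ≤ P) i
    simp only [Fin.coe_castSucc] at e1
    rw [← hwq] at e1
    rw [← hw0] at e0
    have hdiff : w0 i - wq i.castSucc
        = ∑ j : Fin P, (if (j : ℕ) = p then Q ⟨i, by omega⟩ j * γ j else 0) := by
      rw [e1, e0, ← Finset.sum_sub_distrib]
      refine Finset.sum_congr rfl fun j _ => ?_
      by_cases h1 : (j : ℕ) = p
      · rw [if_pos (by omega : p ≤ (j:ℕ)), if_neg (by omega : ¬ p + 1 ≤ (j:ℕ)), if_pos h1]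
        ring
      · by_cases h2 : p ≤ (j : ℕ)
        · rw [if_pos h2, if_pos (by omega : p + 1 ≤ (j:ℕ)), if_neg h1]
          ring
        · rw [if_neg h2, if_neg (by omega : ¬ p + 1 ≤ (j:ℕ)), if_neg h1]
          ring
    have hsingle : (∑ j : Fin P, if (j : ℕ) = p then Q ⟨i, by omega⟩ j * γ j else 0)
        = Q ⟨i, by omega⟩ ⟨p, hpP⟩ * γ ⟨p, hpP⟩ := by
      rw [Finset.sum_eq_single (⟨p, hpP⟩ : Fin P)
        (fun b _ hb => if_neg (fun hc => hb (Fin.ext hc)))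
        (fun hmem => absurd (Finset.mem_univ _) hmem)]
      simp
    rw [hsingle] at hdiff
    show wq i.castSucc = w0 i - gp * m i
    rw [hm, hgp]
    linarith [hdiff]
  -- key applied to wq
  obtain ⟨c1, hkey1⟩ : ∃ c1 : ℝ, (subSq Q (p+1))⁻¹ *ᵥ wq
      = Fin.snoc ((subSq Q p)⁻¹ *ᵥ fun i => wq i.castSucc) 0 + c1 • g :=
    ⟨_, key hQ h wq⟩
  -- the full last column of subSq Q (p+1)
  set mf : Fin (p+1) → ℝ := fun i => Q ⟨i, by omega⟩ ⟨p, hpP⟩ with hmf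
  have hmf_res : (fun i : Fin p => mf i.castSucc) = m := by
    funext i
    rfl
  have hMmf : subSq Q (p+1) *ᵥ Pi.single (Fin.last p) (1:ℝ) = mf := by
    funext i
    rw [mulVec_single]
    show subSq Q (p+1) i (Fin.last p) * 1 = mf i
    rw [mul_one, subSq_apply Q h]
    rfl
  have hMinv_mf : (subSq Q (p+1))⁻¹ *ᵥ mf = Pi.single (Fin.last p) 1 := by
    rw [← hMmf, mulVec_mulVec, Matrix.nonsing_inv_mul _ hM, one_mulVec]
  obtain ⟨c2, hsnocm⟩ : ∃ c2 : ℝ, (Fin.snoc ((subSq Q p)⁻¹ *ᵥ m) 0 : Fin (p+1) → ℝ)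
      = Pi.single (Fin.last p) 1 - c2 • g := by
    have hkey2 := key hQ h mf
    rw [hMinv_mf, hmf_res, ← hg] at hkey2
    exact ⟨_, eq_sub_of_add_eq hkey2.symm⟩
  have hfin : (subSq Q (p+1))⁻¹ *ᵥ wq
      = (Fin.snoc ((subSq Q p)⁻¹ *ᵥ w0) 0 : Fin (p+1) → ℝ)
          - gp • (Pi.single (Fin.last p) 1 : Fin (p+1) → ℝ)
        + (c1 + gp * c2) • g := by
    rw [hkey1, hu1, mulVec_sub, mulVec_smul, snoc_lin, hsnocm]
    module
  -- the vectors in ℝ^P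
  have hv : (fun i : Fin P => if h' : (i:ℕ) < p+1 then ((subSq Q (p+1))⁻¹ *ᵥ wq) ⟨i, h'⟩
        else -γ i)
      = (fun i : Fin P => if h' : (i:ℕ) < p then ((subSq Q p)⁻¹ *ᵥ w0) ⟨i, h'⟩ else -γ i)
        + (c1 + gp * c2) • (padZero g : Fin P → ℝ) := by
    funext i
    simp only [Pi.add_apply, Pi.smul_apply, smul_eq_mul]
    by_cases hi : (i : ℕ) < p
    · rw [dif_pos (by omega : (i:ℕ) < p+1), dif_pos hi, hfin]
      simp only [Pi.add_apply, Pi.sub_apply, Pi.smul_apply, smul_eq_mul]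
      rw [snoc_at_lt _ _ hi,
        single_at_ne ⟨(i:ℕ), (by omega : (i:ℕ) < p+1)⟩
          (fun hc => absurd hc (by omega : ¬ (i:ℕ) = p))]
      have hpad : (padZero g : Fin P → ℝ) i = g ⟨(i:ℕ), by omega⟩ := by
        simp only [padZero]
        rw [dif_pos (by omega : (i:ℕ) < p+1)]
      rw [hpad]
      ring
    · by_cases hi2 : (i : ℕ) = p
      · rw [dif_pos (by omega : (i:ℕ) < p+1), dif_neg hi, hfin]
        simp only [Pi.add_apply, Pi.sub_apply, Pi.smul_apply, smul_eq_mul]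
        rw [snoc_at_last _ _ hi2, single_at_eq ⟨(i:ℕ), (by omega : (i:ℕ) < p+1)⟩ hi2]
        have hpad : (padZero g : Fin P → ℝ) i = g ⟨(i:ℕ), by omega⟩ := by
          simp only [padZero]
          rw [dif_pos (by omega : (i:ℕ) < p+1)]
        have hγ : γ i = gp := by
          rw [hgp]
          exact congrArg γ (Fin.ext hi2)
        rw [hpad, hγ]
        ring
      · rw [dif_neg (by omega : ¬ (i:ℕ) < p+1), dif_neg hi]
        have hpad : (padZero g : Fin P → ℝ) i = 0 := by
          simp only [padZero]
          rw [dif_neg (by omega : ¬ (i:ℕ) < p+1)]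
        rw [hpad]
        ring
  -- conclude
  unfold betaLim
  rw [← hwq, ← hw0, hv, mulVec_add, mulVec_smul, mulVec_padZero A h g]
  have hCg : take A (p+1) *ᵥ g = 0 := hC
  rw [hCg, smul_zero, add_zero]

private lemma betaLim_P {P k : ℕ} (Q : Matrix (Fin P) (Fin P) ℝ) (A : Matrix (Fin k) (Fin P) ℝ)
    (γ : Fin P → ℝ) : betaLim Q A γ P = 0 := by
  have hv : offBlock Q P *ᵥ vdrop γ P = 0 := by
    funext i
    simp only [Matrix.mulVec, dotProduct]
    exact Finset.sum_eq_zero fun j _ => absurd j.2 (by omega)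
  unfold betaLim
  have hz : (fun i : Fin P => if h : (i:ℕ) < P
      then ((subSq Q P)⁻¹ *ᵥ (offBlock Q P *ᵥ vdrop γ P)) ⟨i, h⟩ else -γ i)
      = fun _ => (0:ℝ) := by
    funext i
    rw [dif_pos i.2, hv, mulVec_zero]
    rfl
  rw [hz]
  exact mulVec_zero A

/-- **Statement 19** (Remark B.3 / rb.3): if `C_∞^{(p)} = 0` for all `p` with
`p* < p ≤ P`, then the limit cdf `G_{∞,θ,σ,γ}` coincides with `Φ_{∞,P}`, the cdf of
`N(0, σ² A Q⁻¹ A')`; in particular it does not depend on `γ`. -/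
theorem limit_cdf_reduces_to_gaussian
    {P k O : ℕ} (hP : 1 ≤ P) (hk : 1 ≤ k) (hkP : k ≤ P) (hO : O < P)
    (Q : Matrix (Fin P) (Fin P) ℝ) (A : Matrix (Fin k) (Fin P) ℝ) (c : ℕ → ℝ)
    (hQ : Q.PosDef) (hArank : A.rank = k)
    (hc : ∀ p, O < p → p ≤ P → 0 < c p)
    (θ γ : Fin P → ℝ) (σ : ℝ) (hσ : 0 < σ)
    (huncorr : ∀ p, max (p0 θ) O < p → p ≤ P → Cinf Q A p = 0) :
    ∀ t : Fin k → ℝ, Ginf Q A c O θ σ γ t = PhiInfCdf Q A σ P t := by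
  intro t
  have hp0 : p0 θ ≤ P :=
    Nat.sInf_le (show θ ∈ Mset P P from fun i hi => absurd i.2 (Nat.not_lt.2 hi))
  set ps := max (p0 θ) O with hps
  have hpsP : ps ≤ P := max_le hp0 (le_of_lt hO)
  have chain : ∀ n p, ps ≤ p → p ≤ P → P - p = n →
      SigInf Q A p = SigInf Q A P ∧ betaLim Q A γ p = betaLim Q A γ P := by
    intro n
    induction n with
    | zero =>
      intro p h1 h2 h3
      have hpP : p = P := by omega
      subst hpP
      exact ⟨rfl, rfl⟩
    | succ n ih =>
      intro p h1 h2 h3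
      have hp1 : p + 1 ≤ P := by omega
      have hC : Cinf Q A (p+1) = 0 := huncorr (p+1) (by omega) hp1
      obtain ⟨hS, hB⟩ := ih (p+1) (by omega) hp1 (by omega)
      exact ⟨(sig_step hQ hp1 hC).symm.trans hS, (beta_step hQ hp1 hC γ).symm.trans hB⟩
  have hbeta : ∀ p, ps ≤ p → p ≤ P → betaLim Q A γ p = 0 := fun p h1 h2 =>
    ((chain _ p h1 h2 rfl).2).trans (betaLim_P Q A γ)
  have hsig : ∀ p, ps ≤ p → p ≤ P → PhiInfMeas Q A σ p = PhiInfMeas Q A σ P := by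
    intro p h1 h2
    unfold PhiInfMeas
    rw [(chain _ p h1 h2 rfl).1]
  simp only [Ginf]
  rw [← hps]
  have hD : PhiInfCdf Q A σ ps (t - betaLim Q A γ ps) = PhiInfCdf Q A σ P t := by
    rw [hbeta ps le_rfl hpsP, sub_zero]
    unfold PhiInfCdf
    rw [hsig ps le_rfl hpsP]
  rw [hD]
  have hsum : ∀ p ∈ Finset.Ioc ps P,
      (∫ z in {x : Fin k → ℝ | x ≤ t - betaLim Q A γ p},
          (1 - Dg (σ * zetaInf Q A p) (nuLim Q γ p + bInf Q A p z) (c p * σ * xiInf Q p))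
          ∂(PhiInfMeas Q A σ p))
        * ∏ q ∈ Finset.Ioc p P, Dg (σ * xiInf Q q) (nuLim Q γ q) (c q * σ * xiInf Q q)
      = (PhiInfCdf Q A σ P t
            * (1 - Dg (σ * xiInf Q p) (nuLim Q γ p) (c p * σ * xiInf Q p)))
        * ∏ q ∈ Finset.Ioc p P, Dg (σ * xiInf Q q) (nuLim Q γ q) (c q * σ * xiInf Q q) := by
    intro p hp
    obtain ⟨hp1, hp2⟩ := Finset.mem_Ioc.1 hp
    congr 1
    have hC : Cinf Q A p = 0 := huncorr p hp1 hp2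
    have hzeta : zetaInf Q A p = xiInf Q p := by
      unfold zetaInf
      rw [hC, zero_dotProduct, sub_zero, Real.sqrt_sq]
      unfold xiInf
      exact Real.sqrt_nonneg _
    have hb : ∀ z, bInf Q A p z = 0 := by
      intro z
      unfold bInf
      rw [hC]
      exact zero_dotProduct _
    simp only [hb, add_zero, hzeta, hbeta p hp1.le hp2, sub_zero, hsig p hp1.le hp2]
    rw [MeasureTheory.setIntegral_const, smul_eq_mul]
    rfl
  rw [Finset.sum_congr rfl hsum]
  have hfact : ∑ p ∈ Finset.Ioc ps P,
      (PhiInfCdf Q A σ P t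
          * (1 - Dg (σ * xiInf Q p) (nuLim Q γ p) (c p * σ * xiInf Q p)))
        * ∏ q ∈ Finset.Ioc p P, Dg (σ * xiInf Q q) (nuLim Q γ q) (c q * σ * xiInf Q q)
      = PhiInfCdf Q A σ P t
        * ∑ p ∈ Finset.Ioc ps P,
            (1 - Dg (σ * xiInf Q p) (nuLim Q γ p) (c p * σ * xiInf Q p))
              * ∏ q ∈ Finset.Ioc p P, Dg (σ * xiInf Q q) (nuLim Q γ q) (c q * σ * xiInf Q q) := by
    rw [Finset.mul_sum]
    exact Finset.sum_congr rfl fun p _ => by ring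
  rw [hfact, telescope (fun q => Dg (σ * xiInf Q q) (nuLim Q γ q) (c q * σ * xiInf Q q)) ps P]
  ring

end PMS
end
end
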